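/- arXiv:2005.14421 — 8 statements merged into one kernel-verified Lean document; each statement's English description precedes it below -/
import Mathlib

section
/- Let n ≥ 2 and let λ₁ ≥ λ₂ ≥ ⋯ ≥ λₙ be real numbers satisfying ∑_{i=1}^n arctan λᵢ ≥ (n−2)π/2. Then λ₁ + (n−1)λₙ ≥ 0. -/
open Real Metric Finset MeasureTheory Matrix

noncomputable section

abbrev ES (n : ℕ) := EuclideanSpace ℝ (Fin n)

/-- the `i`-th standard basis vector of `ℝⁿ` -/
def evec (n : ℕ) (i : Fin n) : ES n := EuclideanSpace.single i 1

/-- the Hessian matrix `D²u(x)` -/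
def Hess (n : ℕ) (u : ES n → ℝ) (x : ES n) : Matrix (Fin n) (Fin n) ℝ :=
  fun i j => iteratedFDeriv ℝ 2 u x ![evec n i, evec n j]

/-- the inverse `(gⁱʲ)` of the induced metric `g = Iₙ + (D²u)²` -/
def ginv (n : ℕ) (u : ES n → ℝ) (x : ES n) : Matrix (Fin n) (Fin n) ℝ :=
  (1 + Hess n u x * Hess n u x)⁻¹

/-- the determinant `det g` of the induced metric `g = Iₙ + (D²u)²` -/
def detg (n : ℕ) (u : ES n → ℝ) (x : ES n) : ℝ :=
  (1 + Hess n u x * Hess n u x).det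

/-- first partial derivative `∂ᵢ f (x)` -/
def pd1 (n : ℕ) (f : ES n → ℝ) (x : ES n) (i : Fin n) : ℝ :=
  fderiv ℝ f x (evec n i)

/-- second partial derivative `∂ᵢⱼ f (x)` -/
def pd2 (n : ℕ) (f : ES n → ℝ) (x : ES n) (i j : Fin n) : ℝ :=
  iteratedFDeriv ℝ 2 f x ![evec n i, evec n j]

/-- third partial derivative `∂ᵢⱼₖ f (x)` -/
def pd3 (n : ℕ) (f : ES n → ℝ) (x : ES n) (i j k : Fin n) : ℝ :=
  iteratedFDeriv ℝ 3 f x ![evec n i, evec n j, evec n k]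

/-- the Laplace–Beltrami operator of the gradient graph:
`Δ_g f = ∑ gⁱʲ ∂ᵢⱼ f − ∑ gʲᵖ ψ_q u_{pq} ∂ⱼ f` -/
def DeltaG (n : ℕ) (u ψ f : ES n → ℝ) (x : ES n) : ℝ :=
  (∑ i, ∑ j, ginv n u x i j * pd2 n f x i j) -
    ∑ j, ∑ p, ∑ q, ginv n u x j p * pd1 n ψ x q * pd2 n u x p q * pd1 n f x j

/-- the squared gradient `|∇_g f|² = ∑ gⁱʲ ∂ᵢf ∂ⱼf` -/
def gradSq (n : ℕ) (u f : ES n → ℝ) (x : ES n) : ℝ :=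
  ∑ i, ∑ j, ginv n u x i j * pd1 n f x i * pd1 n f x j

/-- the `k`-th elementary symmetric polynomial of `n` real variables -/
def esymmR (n k : ℕ) (lam : Fin n → ℝ) : ℝ :=
  ∑ s ∈ Finset.powersetCard k (Finset.univ : Finset (Fin n)), ∏ i ∈ s, lam i

/-- second-fundamental-form coefficients `h_{ijk}` at a point where `D²u` is diagonal -/
def hcoef (n : ℕ) (u : ES n → ℝ) (lam : Fin n → ℝ) (x : ES n) (i j k : Fin n) : ℝ :=
  Real.sqrt (1 / (1 + lam i ^ 2)) * Real.sqrt (1 / (1 + lam j ^ 2)) *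
    Real.sqrt (1 / (1 + lam k ^ 2)) * pd3 n u x i j k

/-- `lam x` lists the eigenvalues of the Hessian of `u` at every `x ∈ s` -/
def HessEig (n : ℕ) (u : ES n → ℝ) (lam : ES n → Fin n → ℝ) (s : Set (ES n)) : Prop :=
  ∀ x ∈ s, ∃ P : Matrix (Fin n) (Fin n) ℝ, P * Pᵀ = 1 ∧
    Hess n u x = P * Matrix.diagonal (lam x) * Pᵀ

-- tan superadditive on [0, π/2)
lemma tan_add_ge (x y : ℝ) (hx : 0 ≤ x) (hy : 0 ≤ y) (hxy : x + y < π/2) :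
    Real.tan x + Real.tan y ≤ Real.tan (x + y) := by
  have hx2 : x < π/2 := by linarith
  have hy2 : y < π/2 := by linarith
  have hcx : 0 < Real.cos x := Real.cos_pos_of_mem_Ioo ⟨by linarith [Real.pi_pos], hx2⟩
  have hcy : 0 < Real.cos y := Real.cos_pos_of_mem_Ioo ⟨by linarith [Real.pi_pos], hy2⟩
  have hcxy : 0 < Real.cos (x + y) :=
    Real.cos_pos_of_mem_Ioo ⟨by linarith [Real.pi_pos], hxy⟩
  have hsx : 0 ≤ Real.sin x := Real.sin_nonneg_of_nonneg_of_le_pi hx (by linarith [Real.pi_pos])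
  have hsy : 0 ≤ Real.sin y := Real.sin_nonneg_of_nonneg_of_le_pi hy (by linarith [Real.pi_pos])
  rw [Real.tan_eq_sin_div_cos, Real.tan_eq_sin_div_cos, Real.tan_eq_sin_div_cos,
    Real.sin_add]
  rw [div_add_div _ _ (ne_of_gt hcx) (ne_of_gt hcy), div_le_div_iff₀ (by positivity) hcxy]
  have hcos : Real.cos (x+y) = Real.cos x * Real.cos y - Real.sin x * Real.sin y :=
    Real.cos_add x y
  rw [hcos]
  nlinarith [mul_nonneg (add_nonneg (mul_nonneg hsx hcy.le) (mul_nonneg hcx.le hsy))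
    (mul_nonneg hsx hsy)]

lemma tan_nat_mul_ge (k : ℕ) (δ : ℝ) (h0 : 0 ≤ δ) (hk : (k:ℝ) * δ < π/2) :
    (k:ℝ) * Real.tan δ ≤ Real.tan ((k:ℝ) * δ) := by
  induction k with
  | zero => simp
  | succ k ih =>
    have hkk : (k:ℝ) * δ ≤ ((k:ℕ)+1 : ℝ) * δ := by nlinarith
    push_cast at hk ⊢
    have hk' : (k:ℝ) * δ < π/2 := by nlinarith
    have := ih hk'
    have h2 := tan_add_ge ((k:ℝ)*δ) δ (by positivity) h0 (by push_cast; nlinarith)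
    have : ((k:ℝ)+1) * δ = (k:ℝ)*δ + δ := by ring
    rw [this]
    nlinarith [ih hk', h2]

/-- for critical and supercritical phase, `λ₁ + (n-1) λₙ ≥ 0`. -/
theorem lemma_lambda_one_plus (n : ℕ) (hn : 2 ≤ n) (lam : Fin n → ℝ)
    (hdec : ∀ i j : Fin n, i ≤ j → lam j ≤ lam i)
    (hsum : ((n : ℝ) - 2) * π / 2 ≤ ∑ i, Real.arctan (lam i)) :
    0 ≤ lam ⟨0, by omega⟩ + ((n : ℝ) - 1) * lam ⟨n - 1, by omega⟩ := by
  have h0n : 0 < n := by omega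
  set i0 : Fin n := ⟨0, by omega⟩ with hi0
  set iN : Fin n := ⟨n - 1, by omega⟩ with hiN
  have hfirst : ∀ i : Fin n, lam i ≤ lam i0 := fun i => hdec i0 i (by
    simp [hi0, Fin.le_def])
  have hlastle : lam iN ≤ lam i0 := hfirst iN
  by_cases hNpos : 0 ≤ lam iN
  · have h1 : (1:ℝ) ≤ (n:ℝ) - 1 := by
      have : (2:ℝ) ≤ (n:ℝ) := by exact_mod_cast hn
      linarith
    nlinarith
  push_neg at hNpos
  set a := Real.arctan (lam i0) with ha
  set b := Real.arctan (lam iN) with hb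
  have hb0 : b < 0 := by
    have := Real.arctan_strictMono hNpos
    rw [Real.arctan_zero] at this; exact this
  have hcast : ((n:ℝ) - 1) = ((n - 1 : ℕ) : ℝ) := by
    have : (1:ℝ) ≤ (n:ℝ) := by exact_mod_cast Nat.one_le_of_lt hn
    push_cast [Nat.cast_sub (by omega : 1 ≤ n)]
    ring
  -- key angle inequality
  have key : ((n:ℝ) - 2) * π / 2 ≤ ((n:ℝ) - 1) * a + b := by
    have hsplit : ∑ i ∈ (Finset.univ.erase iN), Real.arctan (lam i) + Real.arctan (lam iN)
        = ∑ i, Real.arctan (lam i) := Finset.sum_erase_add _ _ (Finset.mem_univ iN)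
    have hbound : ∑ i ∈ (Finset.univ.erase iN), Real.arctan (lam i)
        ≤ ((Finset.univ.erase iN).card : ℝ) * a := by
      rw [← nsmul_eq_mul]
      apply Finset.sum_le_card_nsmul
      intro i _
      exact Real.arctan_strictMono.monotone (hfirst i)
    have hcard : (Finset.univ.erase iN).card = n - 1 := by
      rw [Finset.card_erase_of_mem (Finset.mem_univ iN)]
      simp
    rw [hcard] at hbound
    rw [← hcast] at hbound
    linarith [hsum, hsplit.ge, hsplit.le, hbound]
  have ha2 : a < π / 2 := Real.arctan_lt_pi_div_two _
  have hbgt : -(π / 2) < b := Real.neg_pi_div_two_lt_arctan _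
  have hb2 : b < π / 2 := Real.arctan_lt_pi_div_two _
  have hn1 : (1:ℝ) ≤ (n:ℝ) - 1 := by
    have : (2:ℝ) ≤ (n:ℝ) := by exact_mod_cast hn
    linarith
  have hapos : 0 < a := by nlinarith [Real.pi_pos]
  set δ : ℝ := π / 2 - a with hδdef
  have hδpos : 0 < δ := by simp [hδdef]; linarith
  have hδlt : δ < π / 2 := by simp [hδdef]; linarith
  have hkδ : ((n:ℝ) - 1) * δ < π / 2 := by
    have : -b ≤ π / 2 - ((n:ℝ) - 1) * δ := by
      simp only [hδdef]; nlinarith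
    linarith
  have htδ : 0 < Real.tan δ := Real.tan_pos_of_pos_of_lt_pi_div_two hδpos hδlt
  have htan : ((n:ℝ) - 1) * Real.tan δ ≤ Real.tan (((n:ℝ) - 1) * δ) := by
    have := tan_nat_mul_ge (n - 1) δ hδpos.le (by rw [← hcast]; exact hkδ)
    rwa [← hcast] at this
  have hT : 0 < Real.tan (((n:ℝ) - 1) * δ) := lt_of_lt_of_le (by positivity) htan
  -- lam i0 = (tan δ)⁻¹
  have hl0 : lam i0 = (Real.tan δ)⁻¹ := by
    have h1 : Real.tan a = lam i0 := Real.tan_arctan _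
    have h2 : Real.tan (π / 2 - δ) = (Real.tan δ)⁻¹ := Real.tan_pi_div_two_sub δ
    rw [show π / 2 - δ = a by rw [hδdef]; ring] at h2
    rw [← h1, h2]
  -- -lam iN ≤ (tan ((n-1)δ))⁻¹
  have hlN : -lam iN ≤ (Real.tan (((n:ℝ) - 1) * δ))⁻¹ := by
    have hmem1 : -b ∈ Set.Ioo (-(π/2)) (π/2) := ⟨by linarith, by linarith⟩
    have hmem2 : π / 2 - ((n:ℝ) - 1) * δ ∈ Set.Ioo (-(π/2)) (π/2) := by
      constructor
      · nlinarith
      · nlinarith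
    have hle : -b ≤ π / 2 - ((n:ℝ) - 1) * δ := by
      simp only [hδdef]; nlinarith
    have := Real.strictMonoOn_tan.monotoneOn hmem1 hmem2 hle
    rw [Real.tan_pi_div_two_sub] at this
    rw [Real.tan_neg, hb, Real.tan_arctan] at this
    linarith
  -- conclude
  have hinv : (Real.tan (((n:ℝ) - 1) * δ))⁻¹ ≤ (((n:ℝ) - 1) * Real.tan δ)⁻¹ := by
    rw [← one_div, ← one_div]
    exact one_div_le_one_div_of_le (by positivity) htan
  have : ((n:ℝ) - 1) * (-lam iN) ≤ ((n:ℝ) - 1) * (((n:ℝ) - 1) * Real.tan δ)⁻¹ := by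
    apply mul_le_mul_of_nonneg_left (hlN.trans hinv) (by linarith)
  have heq : ((n:ℝ) - 1) * (((n:ℝ) - 1) * Real.tan δ)⁻¹ = (Real.tan δ)⁻¹ := by
    field_simp
  rw [heq] at this
  rw [← hl0] at this
  linarith
end
end

section
/- Let n ≥ 2 and let λ₁ ≥ λ₂ ≥ ⋯ ≥ λₙ be real numbers satisfying ∑_{i=1}^n arctan λᵢ ≥ (n−2)π/2. Then σ_k(λ₁,…,λₙ) ≥ 0 for every k with 1 ≤ k ≤ n−1. -/
open Real Metric Finset MeasureTheory Matrix

noncomputable section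

/-- cons recursion for elementary symmetric polynomials of a multiset -/
lemma my_esymm_cons (a : ℝ) (m : Multiset ℝ) (k : ℕ) :
    (a ::ₘ m).esymm (k+1) = m.esymm (k+1) + a * m.esymm k := by
  unfold Multiset.esymm
  rw [Multiset.powersetCard_cons, Multiset.map_add, Multiset.sum_add, Multiset.map_map]
  congr 1
  rw [show ((Multiset.prod ∘ Multiset.cons a) : Multiset ℝ → ℝ)
      = fun t => a * t.prod by funext t; simp]
  rw [Multiset.sum_map_mul_left]

lemma my_esymm_nonneg (m : Multiset ℝ) (h : ∀ x ∈ m, (0:ℝ) ≤ x) (k : ℕ) :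
    0 ≤ m.esymm k := by
  apply Multiset.sum_nonneg
  intro x hx
  obtain ⟨t, ht, rfl⟩ := Multiset.mem_map.mp hx
  rw [Multiset.mem_powersetCard] at ht
  exact Multiset.prod_nonneg fun y hy => h y (Multiset.mem_of_le ht.1 hy)

lemma my_esymm_zero (m : Multiset ℝ) : m.esymm 0 = 1 := by
  simp [Multiset.esymm]

lemma my_esymm_empty_succ (k : ℕ) : (0 : Multiset ℝ).esymm (k+1) = 0 := by
  simp [Multiset.esymm, Multiset.powersetCard_zero_right]

/-- Key induction: positive entries whose "co-angles" together with `arctan t` fit in `π/2`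
satisfy `t · σ_k ≤ σ_{k+1}`. -/
lemma key_lemma (m : Multiset ℝ) : ∀ (t : ℝ), 0 ≤ t → (∀ x ∈ m, (0:ℝ) < x) →
    Real.arctan t + (m.map (fun x => Real.arctan x⁻¹)).sum ≤ π/2 →
    ∀ k : ℕ, k + 1 ≤ Multiset.card m → t * m.esymm k ≤ m.esymm (k+1) := by
  induction m using Multiset.induction_on with
  | empty => intro t _ _ _ k hk; simp at hk
  | cons a m ih =>
    intro t ht hpos hsum k hk
    have ha : 0 < a := hpos a (Multiset.mem_cons_self a m)
    have hm : ∀ x ∈ m, (0:ℝ) < x := fun x hx => hpos x (Multiset.mem_cons_of_mem hx)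
    rw [Multiset.map_cons, Multiset.sum_cons] at hsum
    set S := (m.map (fun x => Real.arctan x⁻¹)).sum with hS
    have hterm : ∀ y ∈ m.map (fun x => Real.arctan x⁻¹), (0:ℝ) < y := by
      intro y hy
      obtain ⟨x, hx, rfl⟩ := Multiset.mem_map.mp hy
      have : (0:ℝ) < x⁻¹ := inv_pos.mpr (hm x hx)
      calc (0:ℝ) = Real.arctan 0 := Real.arctan_zero.symm
        _ < Real.arctan x⁻¹ := Real.arctan_strictMono this
    have hS0 : 0 ≤ S := Multiset.sum_nonneg fun y hy => le_of_lt (hterm y hy)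
    have hEnn := my_esymm_nonneg m (fun x hx => le_of_lt (hm x hx))
    by_cases hta : t < a
    · -- main case
      have h1 : t * a⁻¹ < 1 := by
        rw [← div_eq_mul_inv]
        exact (div_lt_one ha).mpr hta
      have harc : Real.arctan t + Real.arctan a⁻¹
          = Real.arctan ((t + a⁻¹)/(1 - t * a⁻¹)) := Real.arctan_add h1
      set t' : ℝ := (t + a⁻¹)/(1 - t * a⁻¹) with ht'
      have hden : 0 < 1 - t * a⁻¹ := by linarith
      have ht'0 : 0 ≤ t' := div_nonneg (by positivity) (le_of_lt hden)
      have hsum' : Real.arctan t' + S ≤ π/2 := by rw [← harc]; linarith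
      have IH := ih t' ht'0 hm hsum'
      match k, hk with
      | 0, hk =>
        rw [my_esymm_zero, my_esymm_cons, my_esymm_zero, mul_one]
        have := my_esymm_nonneg m (fun x hx => le_of_lt (hm x hx)) 1
        linarith
      | (k₀+1), hk =>
        have hk' : k₀ + 1 ≤ Multiset.card m := by
          rw [Multiset.card_cons] at hk; omega
        have h2 := IH k₀ hk'
        rw [ht', div_mul_eq_mul_div, div_le_iff₀ hden] at h2
        -- h2 : (t + a⁻¹) * m.esymm k₀ ≤ m.esymm (k₀+1) * (1 - t * a⁻¹)
        have h3 : (t * a + 1) * m.esymm k₀ ≤ m.esymm (k₀+1) * (a - t) := by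
          have := mul_le_mul_of_nonneg_left h2 (le_of_lt ha)
          have hane : a ≠ 0 := ne_of_gt ha
          calc (t * a + 1) * m.esymm k₀ = a * ((t + a⁻¹) * m.esymm k₀) := by
                field_simp
            _ ≤ a * (m.esymm (k₀+1) * (1 - t * a⁻¹)) := this
            _ = m.esymm (k₀+1) * (a - t) := by
                field_simp
        rw [my_esymm_cons, my_esymm_cons]
        have e0 := hEnn k₀
        have e2 := hEnn (k₀+2)
        nlinarith [hEnn (k₀+1)]
    · -- degenerate case: t ≥ a forces m = 0, t = a, k = 0
      push_neg at hta
      have hainv : Real.arctan a⁻¹ = π/2 - Real.arctan a := Real.arctan_inv_of_pos ha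
      have hat : Real.arctan a ≤ Real.arctan t := Real.arctan_strictMono.monotone hta
      have hSle : S ≤ 0 := by rw [hainv] at hsum; linarith
      have hm0 : m = 0 := by
        by_contra hne
        obtain ⟨x, hx⟩ := Multiset.exists_mem_of_ne_zero hne
        have hxm : Real.arctan x⁻¹ ∈ m.map (fun x => Real.arctan x⁻¹) :=
          Multiset.mem_map_of_mem _ hx
        have := Multiset.single_le_sum (fun y hy => le_of_lt (hterm y hy)) _ hxm
        have := hterm _ hxm
        rw [← hS] at *
        linarith
      subst hm0
      have hSz : S = 0 := by simp [hS]
      have hteqa : t = a := by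
        have h5 : Real.arctan t ≤ Real.arctan a := by
          rw [hainv, hSz] at hsum; linarith
        exact le_antisymm (Real.arctan_strictMono.le_iff_le.mp h5) hta
      have hk1 : k = 0 := by simp at hk; omega
      subst hk1; subst hteqa
      rw [my_esymm_zero, my_esymm_cons, my_esymm_zero, my_esymm_empty_succ, mul_one]
      simp

/-- for critical and supercritical phase, `σ_k(λ) ≥ 0` for `1 ≤ k ≤ n-1`. -/
theorem lemma_sigma_nonneg (n : ℕ) (hn : 2 ≤ n) (lam : Fin n → ℝ)
    (hdec : ∀ i j : Fin n, i ≤ j → lam j ≤ lam i)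
    (hsum : ((n : ℝ) - 2) * π / 2 ≤ ∑ i, Real.arctan (lam i)) :
    ∀ k : ℕ, 1 ≤ k → k ≤ n - 1 → 0 ≤ esymmR n k lam := by
  intro k hk1 hk2
  have hn1 : n - 1 + 1 = n := by omega
  set a : Fin n := ⟨n-1, by omega⟩ with ha_def
  have hia : ∀ i : Fin n, i ≤ a := fun i => by
    rw [Fin.le_def]; exact Nat.le_sub_one_of_lt i.isLt
  by_cases hlast : 0 ≤ lam a
  · -- all entries nonnegative
    apply Finset.sum_nonneg
    intro s hs
    exact Finset.prod_nonneg fun i _ => le_trans hlast (hdec i a (hia i))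
  · push_neg at hlast
    set t : ℝ := -lam a with htdef
    have ht0 : 0 < t := by simp [htdef]; linarith
    set b : Fin n := ⟨n-2, by omega⟩ with hb_def
    have hba : b ≠ a := by
      simp only [hb_def, ha_def, Ne, Fin.mk.injEq]; omega
    have ha_mem : a ∈ (Finset.univ : Finset (Fin n)) := Finset.mem_univ a
    have hb_mem : b ∈ (Finset.univ : Finset (Fin n)).erase a :=
      Finset.mem_erase.mpr ⟨hba, Finset.mem_univ b⟩
    -- split the total sum
    have hsplit1 : ∑ i, Real.arctan (lam i)
        = Real.arctan (lam a) + ∑ i ∈ Finset.univ.erase a, Real.arctan (lam i) :=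
      (Finset.add_sum_erase _ _ ha_mem).symm
    have hsplit2 : ∑ i ∈ Finset.univ.erase a, Real.arctan (lam i)
        = Real.arctan (lam b) + ∑ i ∈ (Finset.univ.erase a).erase b, Real.arctan (lam i) :=
      (Finset.add_sum_erase _ _ hb_mem).symm
    have hcard1 : (Finset.univ.erase a).card = n - 1 := by
      rw [Finset.card_erase_of_mem ha_mem, Finset.card_univ, Fintype.card_fin]
    have hcard2 : ((Finset.univ.erase a).erase b).card = n - 2 := by
      rw [Finset.card_erase_of_mem hb_mem, hcard1]; omega
    have hbound : ∑ i ∈ (Finset.univ.erase a).erase b, Real.arctan (lam i)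
        ≤ ((n:ℝ) - 2) * (π/2) := by
      have h := Finset.sum_le_card_nsmul ((Finset.univ.erase a).erase b)
        (fun i => Real.arctan (lam i)) (π/2)
        (fun i _ => le_of_lt (Real.arctan_lt_pi_div_two _))
      rw [hcard2, nsmul_eq_mul] at h
      have h9 : ((n - 2 : ℕ) : ℝ) = (n:ℝ) - 2 := by
        have h8 : (2:ℕ) ≤ n := hn
        push_cast [h8]; ring
      rwa [h9] at h
    -- lam b > 0
    have harcb : Real.arctan t ≤ Real.arctan (lam b) := by
      have hna : Real.arctan (lam a) = -Real.arctan t := by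
        rw [htdef, Real.arctan_neg]; ring
      rw [hsplit1, hsplit2, hna] at hsum
      linarith
    have hb_pos : 0 < lam b := by
      have h0 : Real.arctan 0 < Real.arctan t := Real.arctan_strictMono ht0
      rw [Real.arctan_zero] at h0
      by_contra h
      push_neg at h
      have := Real.arctan_strictMono.monotone h
      rw [Real.arctan_zero] at this
      linarith
    -- entries off the last index are positive
    have hpos : ∀ i ∈ Finset.univ.erase a, 0 < lam i := by
      intro i hi
      have hine : i ≠ a := (Finset.mem_erase.mp hi).1
      have hib : i ≤ b := by
        rw [Fin.le_def]
        have : (i:ℕ) ≠ n - 1 := fun h => hine (Fin.ext h)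
        have := i.isLt
        simp only [hb_def]; omega
      exact lt_of_lt_of_le hb_pos (hdec i b hib)
    -- the multiset of positive entries
    set m' : Multiset ℝ := ((Finset.univ.erase a).val.map lam) with hm'def
    have hm'pos : ∀ x ∈ m', (0:ℝ) < x := by
      intro x hx
      obtain ⟨i, hi, rfl⟩ := Multiset.mem_map.mp hx
      exact hpos i hi
    have hm'card : Multiset.card m' = n - 1 := by
      rw [hm'def, Multiset.card_map]; exact hcard1
    -- angle constraint for the key lemma
    have hconstraint : Real.arctan t + (m'.map (fun x => Real.arctan x⁻¹)).sum ≤ π/2 := by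
      have hms : (m'.map (fun x => Real.arctan x⁻¹)).sum
          = ∑ i ∈ Finset.univ.erase a, Real.arctan (lam i)⁻¹ := by
        rw [hm'def, Multiset.map_map]
        rfl
      have hinv : ∑ i ∈ Finset.univ.erase a, Real.arctan (lam i)⁻¹
          = ∑ i ∈ Finset.univ.erase a, (π/2 - Real.arctan (lam i)) :=
        Finset.sum_congr rfl fun i hi => Real.arctan_inv_of_pos (hpos i hi)
      have hsub : ∑ i ∈ Finset.univ.erase a, (π/2 - Real.arctan (lam i))
          = ((n:ℝ) - 1) * (π/2) - ∑ i ∈ Finset.univ.erase a, Real.arctan (lam i) := by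
        rw [Finset.sum_sub_distrib, Finset.sum_const, hcard1, nsmul_eq_mul]
        have h9 : ((n - 1 : ℕ) : ℝ) = (n:ℝ) - 1 := by
          have h8 : (1:ℕ) ≤ n := by omega
          push_cast [h8]; ring
        rw [h9]
      have hna : Real.arctan (lam a) = -Real.arctan t := by
        rw [htdef, Real.arctan_neg]; ring
      rw [hsplit1, hna] at hsum
      rw [hms, hinv, hsub]
      linarith
    -- conclude
    obtain ⟨k₀, rfl⟩ : ∃ k₀, k = k₀ + 1 := ⟨k - 1, by omega⟩
    have hkey := key_lemma m' t (le_of_lt ht0) hm'pos hconstraint k₀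
      (by rw [hm'card]; omega)
    have hval : (Finset.univ : Finset (Fin n)).val = a ::ₘ (Finset.univ.erase a).val := by
      rw [Finset.erase_val]
      exact (Multiset.cons_erase (Finset.mem_val.mpr ha_mem)).symm
    have hbridge : esymmR n (k₀+1) lam = (lam a ::ₘ m').esymm (k₀+1) := by
      rw [hm'def, ← Multiset.map_cons, ← hval]
      exact (Finset.esymm_map_val lam Finset.univ (k₀+1)).symm
    rw [hbridge, my_esymm_cons]
    have hEnn := my_esymm_nonneg m' (fun x hx => le_of_lt (hm'pos x hx))
    have hla : lam a = -t := by rw [htdef]; ring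
    rw [hla]
    nlinarith [hEnn k₀, hEnn (k₀+1)]
end
end

section
/- Let u be a smooth function on a neighborhood of x₀ ∈ ℝⁿ such that D²u(x₀) = diag(λ₁,…,λₙ) is diagonal and the eigenvalue λ_γ is distinct from all other eigenvalues of D²u(x₀). Let Λ be a C¹ function on a neighborhood of x₀ such that Λ(x) is an eigenvalue of D²u(x) for every x in that neighborhood and Λ(x₀) = λ_γ, and set b(x) = ln √(1 + Λ(x)²). Then ∑_{k=1}^n g^{kk}(x₀) (∂_k b(x₀))² = ∑_{k=1}^n λ_γ² h_{γγk}². -/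
open Real Metric Finset MeasureTheory Matrix

noncomputable section

set_option maxHeartbeats 1000000 in
/-- gradient formula `|∇_g b|² = ∑ₖ λ_γ² h_{γγk}²` for
`b = ln √(1 + λ_γ²)` at a diagonalization point with a simple eigenvalue. -/
theorem grad_b_formula (n : ℕ) (Ω : Set (ES n)) (hΩ : IsOpen Ω) (x₀ : ES n) (hx₀ : x₀ ∈ Ω)
    (u : ES n → ℝ) (hu : ContDiffOn ℝ (⊤ : ℕ∞) u Ω)
    (lam : Fin n → ℝ) (hdiag : Hess n u x₀ = Matrix.diagonal lam)
    (γ : Fin n) (hdist : ∀ k : Fin n, k ≠ γ → lam k ≠ lam γ)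
    (Λ : ES n → ℝ) (hΛ : ContDiffAt ℝ 1 Λ x₀)
    (hΛeig : ∀ᶠ x in nhds x₀, ∃ v : Fin n → ℝ, v ≠ 0 ∧ Hess n u x *ᵥ v = Λ x • v)
    (hΛ₀ : Λ x₀ = lam γ)
    (b : ES n → ℝ) (hb : b = fun x => Real.log (Real.sqrt (1 + Λ x ^ 2))) :
    ∑ k, (1 / (1 + lam k ^ 2)) * (pd1 n b x₀ k) ^ 2 =
      ∑ k, lam γ ^ 2 * (hcoef n u lam x₀ γ γ k) ^ 2 := by
  classical
  -- setup: smoothness of iterated derivatives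
  set S : ES n → (ES n →L[ℝ] ES n →L[ℝ] ℝ) := fderiv ℝ (fderiv ℝ u) with hSdef
  have htop : ((⊤:ℕ∞) : WithTop ℕ∞) + 1 ≤ ((⊤:ℕ∞) : WithTop ℕ∞) := by norm_cast
  have hone : (1 : WithTop ℕ∞) ≤ ((⊤:ℕ∞) : WithTop ℕ∞) := by norm_cast
  have htwo : (2 : WithTop ℕ∞) ≤ ((⊤:ℕ∞) : WithTop ℕ∞) := by norm_cast
  have hux : ∀ x ∈ Ω, ContDiffAt ℝ (⊤:ℕ∞) u x := fun x hx => hu.contDiffAt (hΩ.mem_nhds hx)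
  have hScd : ContDiffAt ℝ (⊤:ℕ∞) S x₀ := by
    rw [hSdef]; exact ((hux x₀ hx₀).fderiv_right htop).fderiv_right htop
  have hSd : DifferentiableAt ℝ S x₀ := hScd.differentiableAt (by simp)
  set T : ES n →L[ℝ] ES n →L[ℝ] ES n →L[ℝ] ℝ := fderiv ℝ S x₀ with hTdef
  have hTS : HasFDerivAt S T x₀ := hSd.hasFDerivAt
  -- derivative of entry evaluation maps
  have key : ∀ a b : ES n, HasFDerivAt (fun x => S x a b)
      (((ContinuousLinearMap.apply ℝ ℝ b).comp
        ((ContinuousLinearMap.apply ℝ (ES n →L[ℝ] ℝ) a).comp T))) x₀ := by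
    intro a b
    have k1 : HasFDerivAt ((ContinuousLinearMap.apply ℝ (ES n →L[ℝ] ℝ) a) ∘ S)
        ((ContinuousLinearMap.apply ℝ (ES n →L[ℝ] ℝ) a).comp T) x₀ :=
      (ContinuousLinearMap.apply ℝ (ES n →L[ℝ] ℝ) a).hasFDerivAt.comp (g := ⇑(ContinuousLinearMap.apply ℝ (ES n →L[ℝ] ℝ) a)) x₀ hTS
    have k2 : HasFDerivAt ((ContinuousLinearMap.apply ℝ ℝ b) ∘
        ((ContinuousLinearMap.apply ℝ (ES n →L[ℝ] ℝ) a) ∘ S))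
        (((ContinuousLinearMap.apply ℝ ℝ b).comp
          ((ContinuousLinearMap.apply ℝ (ES n →L[ℝ] ℝ) a).comp T))) x₀ :=
      (ContinuousLinearMap.apply ℝ ℝ b).hasFDerivAt.comp x₀ k1
    exact k2
  -- second derivative entries
  have hpd2S : ∀ (x : ES n) (i j : Fin n), Hess n u x i j = S x (evec n i) (evec n j) := by
    intro x i j
    rw [hSdef]
    simp [Hess, iteratedFDeriv_two_apply]
  -- third derivative entries
  have hpd3T : ∀ i j k : Fin n, pd3 n u x₀ i j k = T (evec n i) (evec n j) (evec n k) := by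
    intro i j k
    have h1 : pd3 n u x₀ i j k
        = iteratedFDeriv ℝ 2 (fun y => fderiv ℝ u y) x₀
            (Fin.init ![evec n i, evec n j, evec n k])
            (![evec n i, evec n j, evec n k] (Fin.last 2)) := by
      rw [pd3, iteratedFDeriv_succ_apply_right]
    rw [h1, iteratedFDeriv_two_apply, hTdef, hSdef]
    rfl
  -- symmetry of second derivatives of u on Ω
  have symu : ∀ x ∈ Ω, ∀ v w : ES n, S x v w = S x w v := by
    intro x hx v w
    rw [hSdef]
    exact (hux x hx).isSymmSndFDerivAt (by rw [minSmoothness_of_isRCLikeNormedField]; exact htwo) v w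
  have sym12 : ∀ a b c : ES n, T a b c = T b a c := by
    intro a b c
    have h := (((hux x₀ hx₀).fderiv_right htop)).isSymmSndFDerivAt (by rw [minSmoothness_of_isRCLikeNormedField]; exact htwo) a b
    rw [hTdef, hSdef]
    exact congrArg (fun (f : ES n →L[ℝ] ℝ) => f c) h
  have sym23 : ∀ a b c : ES n, T a b c = T a c b := by
    intro a b c
    have hev : (fun x => S x b c) =ᶠ[nhds x₀] (fun x => S x c b) := by
      filter_upwards [hΩ.mem_nhds hx₀] with x hx using symu x hx b c
    have h3 : fderiv ℝ (fun x => S x b c) x₀ = fderiv ℝ (fun x => S x c b) x₀ :=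
      hev.fderiv_eq
    rw [(key b c).fderiv, (key c b).fderiv] at h3
    have h4 := congrArg (fun (f : ES n →L[ℝ] ℝ) => f a) h3
    simpa using h4
  -- derivative of Λ
  set Λ' : ES n →L[ℝ] ℝ := fderiv ℝ Λ x₀ with hΛ'def
  have hΛd : HasFDerivAt Λ Λ' x₀ := (hΛ.differentiableAt one_ne_zero).hasFDerivAt
  -- the characteristic determinant vanishes near x₀
  have hdet0 : (fun x => Matrix.det (Hess n u x - Λ x • 1)) =ᶠ[nhds x₀] (fun _ => (0:ℝ)) := by
    filter_upwards [hΛeig] with x hxe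
    obtain ⟨v, hv, hmv⟩ := hxe
    rw [← Matrix.exists_mulVec_eq_zero_iff]
    refine ⟨v, hv, ?_⟩
    rw [Matrix.sub_mulVec, hmv, Matrix.smul_mulVec, Matrix.one_mulVec, sub_self]
  -- Leibniz expansion of the determinant
  have hφeq : (fun x => Matrix.det (Hess n u x - Λ x • 1))
      = fun x => ∑ σ : Equiv.Perm (Fin n), ((Equiv.Perm.sign σ : ℤ) : ℝ) *
          ∏ i, (S x (evec n (σ i)) (evec n i) - if σ i = i then Λ x else 0) := by
    funext x
    rw [Matrix.det_apply']
    refine Finset.sum_congr rfl fun σ _ => ?_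
    congr 1
    refine Finset.prod_congr rfl fun i _ => ?_
    rw [Matrix.sub_apply, hpd2S, Matrix.smul_apply, Matrix.one_apply, smul_eq_mul,
      mul_ite, mul_one, mul_zero]
  -- derivatives of the matrix entries
  set D : Fin n → Fin n → (ES n →L[ℝ] ℝ) := fun i j =>
    ((ContinuousLinearMap.apply ℝ ℝ (evec n j)).comp
      ((ContinuousLinearMap.apply ℝ (ES n →L[ℝ] ℝ) (evec n i)).comp T)) -
    (if i = j then Λ' else 0) with hDdef
  have hMf : ∀ i j : Fin n,
      HasFDerivAt (fun x => S x (evec n i) (evec n j) - if i = j then Λ x else 0)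
        (D i j) x₀ := by
    intro i j
    rw [hDdef]
    by_cases h : i = j
    · simp only [if_pos h]
      exact (key (evec n i) (evec n j)).sub hΛd
    · simp only [if_neg h, sub_zero]
      exact key (evec n i) (evec n j)
  set Φ : ES n →L[ℝ] ℝ := ∑ σ : Equiv.Perm (Fin n), ((Equiv.Perm.sign σ : ℤ) : ℝ) •
      (∑ i, (∏ j ∈ Finset.univ.erase i,
        (S x₀ (evec n (σ j)) (evec n j) - if σ j = j then Λ x₀ else 0)) • D (σ i) i)
    with hΦdef
  have hφ : HasFDerivAt (fun x => ∑ σ : Equiv.Perm (Fin n), ((Equiv.Perm.sign σ : ℤ) : ℝ) *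
        ∏ i, (S x (evec n (σ i)) (evec n i) - if σ i = i then Λ x else 0)) Φ x₀ := by
    rw [hΦdef]
    exact HasFDerivAt.fun_sum fun (σ : Equiv.Perm (Fin n)) _ =>
      (HasFDerivAt.finset_prod fun i _ => hMf (σ i) i).const_mul _
  have hΦ0 : Φ = 0 := by
    have h1 := hφ.fderiv
    rw [← hφeq, hdet0.fderiv_eq] at h1
    rw [← h1]
    exact fderiv_const_apply 0
  -- entry values at x₀
  have hMval : ∀ i j : Fin n, (S x₀ (evec n i) (evec n j) - if i = j then Λ x₀ else 0)
      = if i = j then lam i - lam γ else 0 := by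
    intro i j
    rw [← hpd2S, hdiag, Matrix.diagonal_apply, hΛ₀]
    by_cases h : i = j <;> simp [h]
  set c : ℝ := ∏ j ∈ Finset.univ.erase γ, (lam j - lam γ) with hc
  have hval : ∀ k : Fin n, Φ (evec n k)
      = c * (T (evec n k) (evec n γ) (evec n γ) - Λ' (evec n k)) := by
    intro k
    rw [hΦdef, ContinuousLinearMap.sum_apply]
    rw [Finset.sum_eq_single (1 : Equiv.Perm (Fin n))]
    · have hMdiag : ∀ j : Fin n, S x₀ (evec n j) (evec n j) - Λ x₀ = lam j - lam γ := by
        intro j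
        have := hMval j j
        simpa using this
      simp only [Equiv.Perm.one_apply, Equiv.Perm.sign_one, Units.val_one, Int.cast_one,
        one_smul, ContinuousLinearMap.sum_apply, ContinuousLinearMap.smul_apply, smul_eq_mul,
        eq_self_iff_true, if_true]
      rw [Finset.sum_eq_single γ]
      · have hprod : (∏ j ∈ Finset.univ.erase γ,
            (S x₀ (evec n j) (evec n j) - Λ x₀)) = c := by
          rw [hc]
          exact Finset.prod_congr rfl fun j _ => hMdiag j
        have hD : D γ γ (evec n k)
            = T (evec n k) (evec n γ) (evec n γ) - Λ' (evec n k) := by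
          rw [hDdef]
          simp
        rw [hprod, hD]
      · intro i _ hiγ
        have hz : (∏ j ∈ Finset.univ.erase i,
            (S x₀ (evec n j) (evec n j) - Λ x₀)) = 0 := by
          refine Finset.prod_eq_zero (Finset.mem_erase.2 ⟨Ne.symm hiγ, Finset.mem_univ _⟩) ?_
          rw [hMdiag]
          exact sub_self _
        rw [hz, zero_mul]
      · intro h
        exact absurd (Finset.mem_univ _) h
    · intro σ _ hσ
      have hz : ∀ i : Fin n, (∏ j ∈ Finset.univ.erase i,
          (S x₀ (evec n (σ j)) (evec n j) - if σ j = j then Λ x₀ else 0)) = 0 := by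
        intro i
        obtain ⟨a, ha⟩ : ∃ a, σ a ≠ a := by
          by_contra hcon
          push_neg at hcon
          exact hσ (Equiv.ext hcon)
        rcases eq_or_ne a i with rfl | hai
        · refine Finset.prod_eq_zero
            (Finset.mem_erase.2 ⟨ha, Finset.mem_univ (σ a)⟩) ?_
          rw [hMval, if_neg (fun hh => ha (σ.injective hh))]
        · refine Finset.prod_eq_zero
            (Finset.mem_erase.2 ⟨hai, Finset.mem_univ a⟩) ?_
          rw [hMval, if_neg ha]
      simp only [ContinuousLinearMap.smul_apply, ContinuousLinearMap.sum_apply, smul_eq_mul]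
      rw [Finset.sum_eq_zero fun i _ => by rw [hz i, zero_mul], mul_zero]
    · intro h
      exact absurd (Finset.mem_univ _) h
  have hcne : c ≠ 0 := by
    rw [hc]
    refine Finset.prod_ne_zero_iff.2 fun j hj => ?_
    exact sub_ne_zero.2 (hdist j (Finset.mem_erase.1 hj).1)
  have hTk : ∀ k : Fin n, Λ' (evec n k) = T (evec n k) (evec n γ) (evec n γ) := by
    intro k
    have h0 : Φ (evec n k) = 0 := by rw [hΦ0]; rfl
    rw [hval k] at h0
    rcases mul_eq_zero.1 h0 with h | h
    · exact absurd h hcne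
    · exact (sub_eq_zero.1 h).symm
  have hpd3 : ∀ k : Fin n, pd3 n u x₀ γ γ k = Λ' (evec n k) := by
    intro k
    rw [hpd3T γ γ k, hTk k]
    exact (sym23 (evec n γ) (evec n γ) (evec n k)).trans
      (sym12 (evec n γ) (evec n k) (evec n γ))
  -- derivative of b
  have hbd : HasFDerivAt b
      ((2:ℝ)⁻¹ • ((1 + Λ x₀ ^ 2)⁻¹ • (Λ x₀ • Λ' + Λ x₀ • Λ'))) x₀ := by
    have h1 : HasFDerivAt (fun x => 1 + Λ x ^ 2) (Λ x₀ • Λ' + Λ x₀ • Λ') x₀ := by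
      have h0 : HasFDerivAt (fun x => 1 + Λ x * Λ x) (Λ x₀ • Λ' + Λ x₀ • Λ') x₀ :=
        (hΛd.mul hΛd).const_add 1
      have heq : (fun x => 1 + Λ x ^ 2) = fun x => 1 + Λ x * Λ x := by
        funext x; ring
      rw [heq]; exact h0
    have h2 := h1.log (by positivity)
    have h3 := h2.const_mul (2:ℝ)⁻¹
    have he2 : b = fun x => (2:ℝ)⁻¹ * Real.log (1 + Λ x ^ 2) := by
      funext x
      simp only [hb]
      rw [Real.log_sqrt (by positivity)]
      ring
    rw [he2]
    exact h3
  have hne : (1:ℝ) + lam γ ^ 2 ≠ 0 := by positivity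
  have hpd1b : ∀ k : Fin n, pd1 n b x₀ k = lam γ * Λ' (evec n k) / (1 + lam γ ^ 2) := by
    intro k
    rw [pd1, hbd.fderiv]
    simp only [ContinuousLinearMap.smul_apply, ContinuousLinearMap.add_apply, smul_eq_mul, hΛ₀]
    field_simp
    ring
  -- final computation
  refine Finset.sum_congr rfl fun k _ => ?_
  rw [hpd1b k]
  have hnek : (1:ℝ) + lam k ^ 2 ≠ 0 := by positivity
  have h1 : Real.sqrt (1 / (1 + lam γ ^ 2)) ^ 2 = 1 / (1 + lam γ ^ 2) :=
    Real.sq_sqrt (by positivity)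
  have h2 : Real.sqrt (1 / (1 + lam k ^ 2)) ^ 2 = 1 / (1 + lam k ^ 2) :=
    Real.sq_sqrt (by positivity)
  rw [hcoef, hpd3 k]
  rw [mul_pow, mul_pow, mul_pow, h1, h2]
  field_simp
end
end

section
/- Let u be a C³ solution of ∑_{i=1}^n arctan λᵢ(x) = ψ(x) on a neighborhood of x₀ ∈ ℝⁿ with ψ of class C¹, such that D²u(x₀) = diag(λ₁,…,λₙ) is diagonal and Du(x₀) ≠ 0. Then at x₀: ∑_{a=1}^n g^{aa} ∂_{aa}|Du| = ∑_{i=1}^n (∂ᵢψ) uᵢ / |Du| + ∑_{a=1}^n g^{aa} (|Du|² − u_a²) λ_a² / |Du|³, and in particular ∑_{a=1}^n g^{aa} ∂_{aa}|Du| ≥ ∑_{i=1}^n (∂ᵢψ) uᵢ / |Du|, where uᵢ = ∂ᵢu(x₀) and g^{aa} = 1/(1+λ_a²). -/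
open Real Metric Finset MeasureTheory Matrix

noncomputable section

section Aux
variable {n : ℕ}

lemma fderiv_apply_comm {f : ES n → (ES n →L[ℝ] ℝ)} {x : ES n}
    (hf : DifferentiableAt ℝ f x) (v w : ES n) :
    fderiv ℝ (fun y => f y w) x v = fderiv ℝ f x v w := by
  have h := ((ContinuousLinearMap.apply ℝ ℝ w).hasFDerivAt.comp x hf.hasFDerivAt).fderiv
  have e1 : (fun y => f y w) = (ContinuousLinearMap.apply ℝ ℝ w) ∘ f := rfl
  rw [e1, h]; rfl

def dfun (n : ℕ) (u : ES n → ℝ) (i : Fin n) : ES n → ℝ := fun y => fderiv ℝ u y (evec n i)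
def hfun (n : ℕ) (u : ES n → ℝ) (i j : Fin n) : ES n → ℝ :=
  fun y => fderiv ℝ (dfun n u j) y (evec n i)
def Tco (n : ℕ) (u : ES n → ℝ) (x₀ : ES n) (i j k : Fin n) : ℝ :=
  fderiv ℝ (hfun n u j k) x₀ (evec n i)

variable {Ω : Set (ES n)} {u : ES n → ℝ} {x : ES n}

lemma dfun_contDiffAt (hΩ : IsOpen Ω) (hu : ContDiffOn ℝ 3 u Ω) (hx : x ∈ Ω) (i : Fin n) :
    ContDiffAt ℝ 2 (dfun n u i) x := by
  have h3 : ContDiffAt ℝ 3 u x := (hu x hx).contDiffAt (hΩ.mem_nhds hx)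
  have h2 : ContDiffAt ℝ 2 (fderiv ℝ u) x := h3.fderiv_right (by norm_num)
  exact h2.clm_apply contDiffAt_const

lemma hfun_contDiffAt (hΩ : IsOpen Ω) (hu : ContDiffOn ℝ 3 u Ω) (hx : x ∈ Ω) (i j : Fin n) :
    ContDiffAt ℝ 1 (hfun n u i j) x := by
  have h2 : ContDiffAt ℝ 1 (fderiv ℝ (dfun n u j)) x :=
    (dfun_contDiffAt hΩ hu hx j).fderiv_right (by norm_num)
  exact h2.clm_apply contDiffAt_const

lemma hfun_eq_hess (hΩ : IsOpen Ω) (hu : ContDiffOn ℝ 3 u Ω) (hx : x ∈ Ω) (i j : Fin n) :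
    Hess n u x i j = hfun n u i j x := by
  have h3 : ContDiffAt ℝ 3 u x := (hu x hx).contDiffAt (hΩ.mem_nhds hx)
  have hdf : DifferentiableAt ℝ (fderiv ℝ u) x :=
    (h3.fderiv_right (m := 2) (by norm_num)).differentiableAt (by norm_num)
  have : Hess n u x i j = fderiv ℝ (fderiv ℝ u) x (evec n i) (evec n j) := by
    rw [Hess, iteratedFDeriv_two_apply]; rfl
  rw [this]
  exact (fderiv_apply_comm hdf (evec n i) (evec n j)).symm

lemma hfun_symm (hΩ : IsOpen Ω) (hu : ContDiffOn ℝ 3 u Ω) (hx : x ∈ Ω) (i j : Fin n) :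
    hfun n u i j x = hfun n u j i x := by
  have h3 : ContDiffAt ℝ 3 u x := (hu x hx).contDiffAt (hΩ.mem_nhds hx)
  have hdf : DifferentiableAt ℝ (fderiv ℝ u) x :=
    (h3.fderiv_right (m := 2) (by norm_num)).differentiableAt (by norm_num)
  have hs := h3.isSymmSndFDerivAt (by norm_num)
  have e : ∀ a b : Fin n, hfun n u a b x = fderiv ℝ (fderiv ℝ u) x (evec n a) (evec n b) := by
    intro a b; exact fderiv_apply_comm hdf (evec n a) (evec n b)
  rw [e, e, hs]

lemma pd2_eq_fderiv {f : ES n → ℝ} (hf : ContDiffAt ℝ 2 f x) (i j : Fin n) :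
    pd2 n f x i j = fderiv ℝ (fun y => fderiv ℝ f y (evec n j)) x (evec n i) := by
  have hdf : DifferentiableAt ℝ (fderiv ℝ f) x :=
    (hf.fderiv_right (m := 1) (by norm_num)).differentiableAt (by norm_num)
  rw [pd2, iteratedFDeriv_two_apply, fderiv_apply_comm hdf]
  rfl

end Aux


-- continuation: T symmetry
section Aux2
variable {n : ℕ} {Ω : Set (ES n)} {u : ES n → ℝ} {x : ES n}

lemma Tco_swap23 (hΩ : IsOpen Ω) (hu : ContDiffOn ℝ 3 u Ω) (hx : x ∈ Ω) (i j k : Fin n) :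
    Tco n u x i j k = Tco n u x i k j := by
  have hev : hfun n u j k =ᶠ[nhds x] hfun n u k j :=
    Filter.eventually_of_mem (hΩ.mem_nhds hx) (fun y hy => hfun_symm hΩ hu hy j k)
  rw [Tco, Tco, hev.fderiv_eq]

lemma Tco_swap12 (hΩ : IsOpen Ω) (hu : ContDiffOn ℝ 3 u Ω) (hx : x ∈ Ω) (i j k : Fin n) :
    Tco n u x i j k = Tco n u x j i k := by
  have hd2 : ContDiffAt ℝ 2 (dfun n u k) x := dfun_contDiffAt hΩ hu hx k
  have hdf : DifferentiableAt ℝ (fderiv ℝ (dfun n u k)) x :=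
    (hd2.fderiv_right (m := 1) (by norm_num)).differentiableAt (by norm_num)
  have hs := hd2.isSymmSndFDerivAt (by norm_num)
  have e : ∀ a b : Fin n, Tco n u x a b k = fderiv ℝ (fderiv ℝ (dfun n u k)) x (evec n a) (evec n b) := by
    intro a b
    exact fderiv_apply_comm hdf (evec n a) (evec n b)
  rw [e, e, hs]

lemma Tco_rot (hΩ : IsOpen Ω) (hu : ContDiffOn ℝ 3 u Ω) (hx : x ∈ Ω) (a i : Fin n) :
    Tco n u x a a i = Tco n u x i a a := by
  rw [Tco_swap23 hΩ hu hx, Tco_swap12 hΩ hu hx]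

end Aux2


section DetDeriv
variable {n : ℕ}

lemma det_hasFDerivAt {𝔸 : Type*} [NormedCommRing 𝔸] [NormedAlgebra ℝ 𝔸]
    (m : Fin n → Fin n → ES n → 𝔸) (m' : Fin n → Fin n → (ES n →L[ℝ] 𝔸)) (x₀ : ES n)
    (hm : ∀ i j, HasFDerivAt (m i j) (m' i j) x₀)
    (hoff : ∀ i j, i ≠ j → m i j x₀ = 0) (v : ES n) :
    ∃ L : ES n →L[ℝ] 𝔸,
      HasFDerivAt (fun x => Matrix.det (Matrix.of fun i j => m i j x)) L x₀ ∧
      L v = ∑ a, (∏ b ∈ Finset.univ.erase a, m b b x₀) * (m' a a v) := by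
  classical
  have hdet : (fun x => Matrix.det (Matrix.of fun i j => m i j x)) =
      fun x => ∑ σ : Equiv.Perm (Fin n),
        (((Equiv.Perm.sign σ : ℤ) : 𝔸) * ∏ i, m (σ i) i x) := by
    funext x; rw [Matrix.det_apply']; rfl
  have hprod : ∀ σ : Equiv.Perm (Fin n),
      HasFDerivAt (fun x => ∏ i, m (σ i) i x)
        (∑ i, (∏ j ∈ Finset.univ.erase i, m (σ j) j x₀) • m' (σ i) i) x₀ := by
    intro σ
    exact HasFDerivAt.finset_prod (fun i _ => hm (σ i) i)
  set L : ES n →L[ℝ] 𝔸 := ∑ σ : Equiv.Perm (Fin n),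
      ((Equiv.Perm.sign σ : ℤ) : 𝔸) •
        (∑ i, (∏ j ∈ Finset.univ.erase i, m (σ j) j x₀) • m' (σ i) i) with hL
  refine ⟨L, ?_, ?_⟩
  · rw [hdet]
    exact HasFDerivAt.fun_sum (fun σ _ => (hprod σ).const_mul _)
  · rw [hL]
    rw [ContinuousLinearMap.sum_apply]
    rw [Finset.sum_eq_single (1 : Equiv.Perm (Fin n))]
    · simp only [Equiv.Perm.sign_one, Units.val_one, Int.cast_one, one_smul,
        ContinuousLinearMap.sum_apply, ContinuousLinearMap.smul_apply,
        Equiv.Perm.one_apply, smul_eq_mul]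
    · intro σ _ hσ
      obtain ⟨p, hp⟩ : ∃ p, σ p ≠ p := by
        by_contra h
        push_neg at h
        exact hσ (Equiv.ext h)
      have hzero : ∀ i : Fin n,
          (∏ j ∈ Finset.univ.erase i, m (σ j) j x₀) = 0 := by
        intro i
        by_cases hpi : p = i
        · refine Finset.prod_eq_zero (i := σ p) ?_ ?_
          · subst hpi; simp [Finset.mem_erase, hp]
          · refine hoff _ _ ?_
            intro hc
            exact hp (σ.injective hc)
        · refine Finset.prod_eq_zero (i := p) ?_ (hoff _ _ hp)
          simp [Finset.mem_erase, hpi]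
      simp only [ContinuousLinearMap.smul_apply, ContinuousLinearMap.sum_apply]
      rw [Finset.sum_eq_zero (fun i _ => by rw [hzero i, zero_smul])]
      simp
    · intro h; exact absurd (Finset.mem_univ 1) h

end DetDeriv


section PointwiseId
variable {n : ℕ}

lemma one_add_I_mul (t : ℝ) :
    (1:ℂ) + Complex.I * t = (Real.sqrt (1+t^2) : ℂ) * Complex.exp (Complex.I * t.arctan) := by
  have hs : Real.sqrt (1+t^2) ≠ 0 := by positivity
  have hs' : ((Real.sqrt (1+t^2) : ℝ) : ℂ) ≠ 0 := Complex.ofReal_ne_zero.mpr hs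
  rw [mul_comm Complex.I ((t.arctan : ℝ) : ℂ), Complex.exp_mul_I, ← Complex.ofReal_cos, ← Complex.ofReal_sin,
    Real.cos_arctan, Real.sin_arctan]
  push_cast
  field_simp

lemma sqrt_prod' {ι : Type*} (s : Finset ι) (f : ι → ℝ) (hf : ∀ i, 0 ≤ f i) :
    Real.sqrt (∏ i ∈ s, f i) = ∏ i ∈ s, Real.sqrt (f i) := by
  classical
  induction s using Finset.cons_induction with
  | empty => simp
  | cons a s ha ih => rw [Finset.prod_cons, Finset.prod_cons, Real.sqrt_mul (hf a), ih]

lemma conj_det {R : Type*} [CommRing R] (P D : Matrix (Fin n) (Fin n) R) (hP : P * Pᵀ = 1) :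
    Matrix.det (P * D * Pᵀ) = Matrix.det D := by
  have h2 : P.det * P.det = 1 := by
    have := congrArg Matrix.det hP
    rwa [Matrix.det_mul, Matrix.det_transpose, Matrix.det_one] at this
  rw [Matrix.det_mul, Matrix.det_mul, Matrix.det_transpose]
  calc P.det * D.det * P.det = D.det * (P.det * P.det) := by ring
  _ = D.det := by rw [h2, mul_one]

lemma conj_one_add {R : Type*} [CommRing R] (P A B : Matrix (Fin n) (Fin n) R)
    (hP : P * Pᵀ = 1) (hAB : A = P * B * Pᵀ) : 1 + A = P * (1 + B) * Pᵀ := by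
  rw [Matrix.mul_add, Matrix.add_mul, Matrix.mul_one, hP, hAB]

lemma detC_eq (H : Matrix (Fin n) (Fin n) ℝ) (lam : Fin n → ℝ) (P : Matrix (Fin n) (Fin n) ℝ)
    (hP : P * Pᵀ = 1) (hH : H = P * Matrix.diagonal lam * Pᵀ) :
    Matrix.det (Matrix.of fun i j => (if i = j then (1:ℂ) else 0) + Complex.I * (H i j : ℂ))
      = ∏ a, ((1:ℂ) + Complex.I * (lam a : ℂ)) := by
  classical
  set φ := Complex.ofRealHom with hφ
  set Pc := P.map φ with hPc
  set Dc := Matrix.diagonal (fun a => (lam a : ℂ)) with hDc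
  have hPcP : Pc * Pcᵀ = 1 := by
    rw [hPc, ← Matrix.transpose_map, ← Matrix.map_mul, hP,
      Matrix.map_one φ (map_zero φ) (map_one φ)]
  have hHc : H.map φ = Pc * Dc * Pcᵀ := by
    rw [hH, Matrix.map_mul, Matrix.map_mul, Matrix.transpose_map, hPc, hDc,
      Matrix.diagonal_map (map_zero φ)]
    rfl
  have hsm : Complex.I • (H.map φ) = Pc * (Complex.I • Dc) * Pcᵀ := by
    rw [Matrix.mul_smul, Matrix.smul_mul, hHc]
  have hof : (Matrix.of fun i j => (if i = j then (1:ℂ) else 0) + Complex.I * (H i j : ℂ))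
      = 1 + Complex.I • (H.map φ) := by
    ext i j
    simp [Matrix.one_apply, Matrix.map_apply, hφ]
  rw [hof, conj_one_add Pc _ _ hPcP hsm, conj_det _ _ hPcP]
  have h1D : (1 : Matrix (Fin n) (Fin n) ℂ) + Complex.I • Dc
      = Matrix.diagonal (fun a => (1:ℂ) + Complex.I * (lam a : ℂ)) := by
    ext i j
    by_cases h : i = j <;>
      simp [hDc, Matrix.diagonal_apply, h, Matrix.one_apply, Matrix.smul_apply, smul_eq_mul]
  rw [h1D, Matrix.det_diagonal]

lemma detR_eq (H : Matrix (Fin n) (Fin n) ℝ) (lam : Fin n → ℝ) (P : Matrix (Fin n) (Fin n) ℝ)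
    (hP : P * Pᵀ = 1) (hH : H = P * Matrix.diagonal lam * Pᵀ) :
    Matrix.det (Matrix.of fun i j => (if i = j then (1:ℝ) else 0) + ∑ c, H i c * H c j)
      = ∏ a, (1 + lam a^2) := by
  classical
  have hPtP : Pᵀ * P = 1 := mul_eq_one_comm.mp hP
  have hH2 : H * H = P * (Matrix.diagonal (fun a => lam a ^ 2)) * Pᵀ := by
    have : Matrix.diagonal lam * Matrix.diagonal lam = Matrix.diagonal (fun a => lam a ^ 2) := by
      rw [Matrix.diagonal_mul_diagonal]
      congr 1; funext a; ring
    calc H * H = P * Matrix.diagonal lam * (Pᵀ * P) * Matrix.diagonal lam * Pᵀ := by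
          rw [hH]; noncomm_ring
    _ = P * (Matrix.diagonal lam * Matrix.diagonal lam) * Pᵀ := by
          rw [hPtP]; noncomm_ring
    _ = _ := by rw [this]
  have hof : (Matrix.of fun i j => (if i = j then (1:ℝ) else 0) + ∑ c, H i c * H c j)
      = 1 + H * H := by
    ext i j
    simp [Matrix.one_apply, Matrix.mul_apply]
  rw [hof, conj_one_add P _ _ hP hH2, conj_det _ _ hP]
  have h1D : (1 : Matrix (Fin n) (Fin n) ℝ) + Matrix.diagonal (fun a => lam a ^ 2)
      = Matrix.diagonal (fun a => 1 + lam a ^ 2) := by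
    rw [← Matrix.diagonal_one, ← Matrix.diagonal_add]
  rw [h1D, Matrix.det_diagonal]

end PointwiseId


section PartA
variable {n : ℕ}

lemma partA {Ω : Set (ES n)} (hΩ : IsOpen Ω) {u ψ : ES n → ℝ} {lamF : ES n → Fin n → ℝ}
    (hu : ContDiffOn ℝ 3 u Ω) (hψ : ContDiffOn ℝ 1 ψ Ω) (heig : HessEig n u lamF Ω)
    (heq : ∀ x ∈ Ω, ∑ i, Real.arctan (lamF x i) = ψ x)
    {x₀ : ES n} (hx₀ : x₀ ∈ Ω) (lam : Fin n → ℝ) (hdiag : Hess n u x₀ = Matrix.diagonal lam)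
    (k : Fin n) :
    pd1 n ψ x₀ k = ∑ a, Tco n u x₀ k a a * (1 / (1 + lam a ^ 2)) := by
  classical
  have hΩx : Ω ∈ nhds x₀ := hΩ.mem_nhds hx₀
  have hlam : ∀ i j, hfun n u i j x₀ = if i = j then lam i else 0 := by
    intro i j
    rw [← hfun_eq_hess hΩ hu hx₀, hdiag, Matrix.diagonal_apply]
  -- the two determinant functions
  set mC : Fin n → Fin n → ES n → ℂ :=
    fun i j x => (if i = j then (1:ℂ) else 0) + Complex.I * (hfun n u i j x : ℂ) with hmC
  set mR : Fin n → Fin n → ES n → ℝ :=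
    fun i j x => (if i = j then (1:ℝ) else 0) + ∑ m, hfun n u i m x * hfun n u m j x with hmR
  set c : ES n → ℂ := fun x => Matrix.det (Matrix.of fun i j => mC i j x) with hc
  set δf : ES n → ℝ := fun x => Matrix.det (Matrix.of fun i j => mR i j x) with hδf
  -- pointwise identity on Ω
  have hkey : ∀ x ∈ Ω, c x = (Real.sqrt (δf x) : ℂ) * Complex.exp (Complex.I * ψ x) := by
    intro x hx
    obtain ⟨P, hP, hH⟩ := heig x hx
    have hent : ∀ i j, hfun n u i j x = Hess n u x i j :=
      fun i j => (hfun_eq_hess hΩ hu hx i j).symm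
    have hcx : c x = ∏ a, ((1:ℂ) + Complex.I * (lamF x a : ℂ)) := by
      rw [hc]
      simp only [hmC, hent]
      exact detC_eq _ _ _ hP hH
    have hδx : δf x = ∏ a, (1 + lamF x a ^ 2) := by
      rw [hδf]
      simp only [hmR, hent]
      exact detR_eq _ _ _ hP hH
    rw [hcx, hδx]
    have hfac : ∀ a : Fin n, (1:ℂ) + Complex.I * (lamF x a : ℂ)
        = (Real.sqrt (1 + lamF x a ^ 2) : ℂ) * Complex.exp (Complex.I * (lamF x a).arctan) :=
      fun a => one_add_I_mul (lamF x a)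
    rw [Finset.prod_congr rfl (fun a _ => hfac a), Finset.prod_mul_distrib]
    rw [sqrt_prod' _ _ (fun a => by positivity)]
    rw [← Complex.exp_sum]
    congr 2
    · push_cast; ring
    · rw [← Finset.mul_sum]
      norm_cast
      rw [heq x hx]
  have hδpos : ∀ x ∈ Ω, 0 < δf x := by
    intro x hx
    obtain ⟨P, hP, hH⟩ := heig x hx
    have hent : ∀ i j, hfun n u i j x = Hess n u x i j :=
      fun i j => (hfun_eq_hess hΩ hu hx i j).symm
    have hδx : δf x = ∏ a, (1 + lamF x a ^ 2) := by
      rw [hδf]; simp only [hmR, hent]; exact detR_eq _ _ _ hP hH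
    rw [hδx]
    exact Finset.prod_pos (fun a _ => by positivity)
  -- derivatives of entries
  have hDh : ∀ i j, HasFDerivAt (hfun n u i j) (fderiv ℝ (hfun n u i j) x₀) x₀ :=
    fun i j => ((hfun_contDiffAt hΩ hu hx₀ i j).differentiableAt one_ne_zero).hasFDerivAt
  have hmCder : ∀ i j, HasFDerivAt (mC i j)
      (Complex.I • (Complex.ofRealCLM.comp (fderiv ℝ (hfun n u i j) x₀))) x₀ := by
    intro i j
    have h2 : HasFDerivAt (fun x => ((hfun n u i j x : ℝ) : ℂ))
        (Complex.ofRealCLM.comp (fderiv ℝ (hfun n u i j) x₀)) x₀ :=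
      Complex.ofRealCLM.hasFDerivAt.comp x₀ (hDh i j)
    exact (h2.const_mul Complex.I).const_add _
  have hmRder : ∀ i j, HasFDerivAt (mR i j)
      (∑ m, (hfun n u i m x₀ • fderiv ℝ (hfun n u m j) x₀
        + hfun n u m j x₀ • fderiv ℝ (hfun n u i m) x₀)) x₀ := by
    intro i j
    exact (HasFDerivAt.fun_sum (fun m _ => (hDh i m).mul (hDh m j))).const_add _
  -- derivative of c
  obtain ⟨Lc, hLc, hLcv⟩ := det_hasFDerivAt mC
    (fun i j => Complex.I • (Complex.ofRealCLM.comp (fderiv ℝ (hfun n u i j) x₀))) x₀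
    hmCder (fun i j hij => by simp [hmC, hlam, if_neg hij]) (evec n k)
  obtain ⟨Lδ, hLδ, hLδv⟩ := det_hasFDerivAt mR
    (fun i j => ∑ m, (hfun n u i m x₀ • fderiv ℝ (hfun n u m j) x₀
        + hfun n u m j x₀ • fderiv ℝ (hfun n u i m) x₀)) x₀
    hmRder (fun i j hij => by
      simp only [hmR, if_neg hij, zero_add]
      refine Finset.sum_eq_zero (fun m _ => ?_)
      rcases eq_or_ne m j with h | h
      · subst h
        rw [hlam i m, if_neg hij, zero_mul]
      · rw [hlam m j, if_neg h, mul_zero]) (evec n k)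
  -- values at x₀
  have hTval : ∀ i j, fderiv ℝ (hfun n u i j) x₀ (evec n k) = Tco n u x₀ k i j :=
    fun i j => rfl
  set T : Fin n → ℝ := fun a => Tco n u x₀ k a a with hT
  set p : ℝ := pd1 n ψ x₀ k with hp
  set E : ℂ := Complex.exp (Complex.I * ψ x₀) with hE
  set Δ : ℝ := δf x₀ with hΔdef
  have hΔpos : 0 < Δ := hδpos x₀ hx₀
  set s : ℝ := Real.sqrt Δ with hsdef
  have hspos : 0 < s := Real.sqrt_pos.mpr hΔpos
  have hs2 : s ^ 2 = Δ := Real.sq_sqrt hΔpos.le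
  have hsqrt : HasFDerivAt (fun x => Real.sqrt (δf x)) ((1 / (2 * s)) • Lδ) x₀ :=
    (Real.hasDerivAt_sqrt hΔpos.ne').comp_hasFDerivAt x₀ hLδ
  have hψd : HasFDerivAt ψ (fderiv ℝ ψ x₀) x₀ :=
    (((hψ x₀ hx₀).contDiffAt hΩx).differentiableAt one_ne_zero).hasFDerivAt
  have hexp : HasFDerivAt (fun x => Complex.exp (Complex.I * ψ x))
      (E • (Complex.I • (Complex.ofRealCLM.comp (fderiv ℝ ψ x₀)))) x₀ := by
    have h2 : HasFDerivAt (fun x => ((ψ x : ℝ) : ℂ))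
        (Complex.ofRealCLM.comp (fderiv ℝ ψ x₀)) x₀ :=
      Complex.ofRealCLM.hasFDerivAt.comp x₀ hψd
    exact (h2.const_mul Complex.I).cexp
  have hRHS : HasFDerivAt (fun x => (Real.sqrt (δf x) : ℂ) * Complex.exp (Complex.I * ψ x))
      ((s:ℂ) • (E • (Complex.I • (Complex.ofRealCLM.comp (fderiv ℝ ψ x₀))))
        + E • (Complex.ofRealCLM.comp ((1 / (2 * s)) • Lδ))) x₀ := by
    have h1 : HasFDerivAt (fun x => ((Real.sqrt (δf x) : ℝ) : ℂ))
        (Complex.ofRealCLM.comp ((1 / (2 * s)) • Lδ)) x₀ :=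
      Complex.ofRealCLM.hasFDerivAt.comp x₀ hsqrt
    exact h1.mul hexp
  have hev : c =ᶠ[nhds x₀] (fun x => (Real.sqrt (δf x) : ℂ) * Complex.exp (Complex.I * ψ x)) :=
    Filter.eventuallyEq_of_mem hΩx hkey
  have huniq := hLc.unique (hRHS.congr_of_eventuallyEq hev)
  have hvalL := congrArg (fun L : ES n →L[ℝ] ℂ => L (evec n k)) huniq
  simp only [ContinuousLinearMap.add_apply, ContinuousLinearMap.smul_apply,
    ContinuousLinearMap.coe_comp', Function.comp_apply, Complex.ofRealCLM_apply,
    smul_eq_mul] at hvalL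
  -- compute Lc (evec n k)
  have hLcval : Lc (evec n k) = ∑ a,
      (∏ b ∈ Finset.univ.erase a, ((1:ℂ) + Complex.I * (lam b : ℂ))) * (Complex.I * (T a : ℂ)) := by
    rw [hLcv]
    refine Finset.sum_congr rfl (fun a _ => ?_)
    have h1 : (∏ b ∈ Finset.univ.erase a, mC b b x₀)
        = ∏ b ∈ Finset.univ.erase a, ((1:ℂ) + Complex.I * (lam b : ℂ)) :=
      Finset.prod_congr rfl (fun b _ => by simp [hmC, hlam])
    have h2 : (Complex.I • Complex.ofRealCLM.comp (fderiv ℝ (hfun n u a a) x₀)) (evec n k)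
        = Complex.I * (T a : ℂ) := by
      simp only [ContinuousLinearMap.smul_apply, ContinuousLinearMap.coe_comp',
        Function.comp_apply, Complex.ofRealCLM_apply, smul_eq_mul, hTval, hT]
    rw [h1, h2]
  -- compute Lδ (evec n k)
  have hmRdiag : ∀ b : Fin n, mR b b x₀ = 1 + lam b ^ 2 := by
    intro b
    simp only [hmR, if_pos rfl]
    congr 1
    rw [Finset.sum_eq_single b]
    · rw [hlam b b, if_pos rfl]; ring
    · intro m _ hm
      rw [hlam b m, if_neg (fun h => hm h.symm), zero_mul]
    · intro h; exact absurd (Finset.mem_univ b) h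
  have hLδval : Lδ (evec n k) = ∑ a,
      (∏ b ∈ Finset.univ.erase a, (1 + lam b ^ 2)) * (2 * lam a * T a) := by
    rw [hLδv]
    refine Finset.sum_congr rfl (fun a _ => ?_)
    have h1 : (∏ b ∈ Finset.univ.erase a, mR b b x₀)
        = ∏ b ∈ Finset.univ.erase a, (1 + lam b ^ 2) :=
      Finset.prod_congr rfl (fun b _ => hmRdiag b)
    have h2 : (∑ m, (hfun n u a m x₀ • fderiv ℝ (hfun n u m a) x₀
        + hfun n u m a x₀ • fderiv ℝ (hfun n u a m) x₀)) (evec n k)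
        = 2 * lam a * T a := by
      simp only [ContinuousLinearMap.sum_apply, ContinuousLinearMap.add_apply,
        ContinuousLinearMap.smul_apply, smul_eq_mul, hTval]
      rw [Finset.sum_eq_single a]
      · rw [hlam a a, if_pos rfl, hT]; ring
      · intro m _ hm
        rw [hlam a m, if_neg (fun h => hm h.symm), hlam m a, if_neg hm]; ring
      · intro h; exact absurd (Finset.mem_univ a) h
    rw [h1, h2]
  -- c x₀ value
  have hC0 : (∏ b, ((1:ℂ) + Complex.I * (lam b : ℂ))) = (s : ℂ) * E := by
    have hdiagC : (Matrix.of fun i j => mC i j x₀)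
        = Matrix.diagonal (fun b => (1:ℂ) + Complex.I * (lam b : ℂ)) := by
      ext i j
      rcases eq_or_ne i j with h | h
      · subst h; simp [hmC, hlam]
      · simp [hmC, hlam, if_neg h, Matrix.diagonal_apply_ne _ h]
    have hcx₀ : c x₀ = ∏ b, ((1:ℂ) + Complex.I * (lam b : ℂ)) := by
      rw [show c x₀ = (Matrix.of fun i j => mC i j x₀).det from rfl, hdiagC, Matrix.det_diagonal]
    have h2 := hkey x₀ hx₀
    rw [hcx₀] at h2
    rw [h2, ← hE, ← hΔdef, ← hsdef]
  have hsE_ne : (s : ℂ) * E ≠ 0 := by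
    apply mul_ne_zero
    · exact_mod_cast hspos.ne'
    · rw [hE]; exact Complex.exp_ne_zero _
  have hfacne : ∀ b : Fin n, ((1:ℂ) + Complex.I * (lam b : ℂ)) ≠ 0 := by
    intro b h
    have := congrArg Complex.re h
    simp at this
  -- transform LHS per term
  have hterm : ∀ a : Fin n,
      (∏ b ∈ Finset.univ.erase a, ((1:ℂ) + Complex.I * (lam b : ℂ))) * (Complex.I * (T a : ℂ))
      = ((s:ℂ) * E) * (((T a * lam a * (1/(1+lam a^2)) : ℝ) : ℂ)
          + Complex.I * ((T a * (1/(1+lam a^2)) : ℝ) : ℂ)) := by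
    intro a
    have hmul : ((1:ℂ) + Complex.I * (lam a : ℂ))
        * ∏ b ∈ Finset.univ.erase a, ((1:ℂ) + Complex.I * (lam b : ℂ)) = (s:ℂ) * E := by
      rw [Finset.mul_prod_erase Finset.univ (fun b => (1:ℂ) + Complex.I * (lam b : ℂ)) (Finset.mem_univ a), hC0]
    have hne : ((1:ℝ) + lam a ^ 2) ≠ 0 := by positivity
    apply mul_left_cancel₀ (hfacne a)
    rw [← mul_assoc, hmul]
    rw [show ((1:ℂ) + Complex.I * (lam a : ℂ))
        * (((s:ℂ) * E) * (((T a * lam a * (1/(1+lam a^2)) : ℝ) : ℂ)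
          + Complex.I * ((T a * (1/(1+lam a^2)) : ℝ) : ℂ)))
        = ((s:ℂ) * E) * (((1:ℂ) + Complex.I * (lam a : ℂ))
          * (((T a * lam a * (1/(1+lam a^2)) : ℝ) : ℂ)
            + Complex.I * ((T a * (1/(1+lam a^2)) : ℝ) : ℂ))) from by ring]
    congr 1
    have hneC : ((1:ℂ) + (lam a : ℂ) ^ 2) ≠ 0 := by
      have : (((1 + lam a ^ 2 : ℝ)) : ℂ) ≠ 0 := Complex.ofReal_ne_zero.mpr hne
      push_cast at this
      convert this using 2 <;> push_cast <;> ring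
    push_cast
    field_simp
    ring_nf
    rw [Complex.I_sq]
    ring
  -- final assembly
  have hEVAL : Lc (evec n k) = (s:ℂ) * (E * (Complex.I * ((fderiv ℝ ψ x₀) (evec n k) : ℂ)))
      + E * (((1/(2*s)) * (Lδ (evec n k)) : ℝ) : ℂ) := by
    rw [huniq]
    simp only [ContinuousLinearMap.add_apply, ContinuousLinearMap.smul_apply,
      ContinuousLinearMap.coe_comp', Function.comp_apply, Complex.ofRealCLM_apply,
      smul_eq_mul, Complex.real_smul, Complex.ofReal_mul]
  have hL2 : Lc (evec n k) = ((s:ℂ) * E)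
      * (((∑ a, T a * lam a * (1/(1+lam a^2)) : ℝ) : ℂ)
        + Complex.I * ((∑ a, T a * (1/(1+lam a^2)) : ℝ) : ℂ)) := by
    rw [hLcval]
    rw [Finset.sum_congr rfl (fun a _ => hterm a)]
    rw [← Finset.mul_sum]
    congr 1
    push_cast
    rw [Finset.sum_add_distrib, Finset.mul_sum]
  have hreal : (1/(2*s)) * (Lδ (evec n k)) = s * ((Lδ (evec n k))/(2*Δ)) := by
    rw [← hs2]
    field_simp
  have hmain : ((s:ℂ) * E)
      * (((∑ a, T a * lam a * (1/(1+lam a^2)) : ℝ) : ℂ)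
        + Complex.I * ((∑ a, T a * (1/(1+lam a^2)) : ℝ) : ℂ))
      = ((s:ℂ) * E) * (Complex.I * (p:ℂ) + (((Lδ (evec n k))/(2*Δ) : ℝ) : ℂ)) := by
    rw [← hL2, hEVAL, hreal]
    have hp' : (fderiv ℝ ψ x₀) (evec n k) = p := rfl
    rw [hp']
    push_cast
    ring
  have hfin := mul_left_cancel₀ hsE_ne hmain
  have him := congrArg Complex.im hfin
  simp only [Complex.add_im, Complex.mul_im, Complex.I_re, Complex.I_im,
    Complex.ofReal_re, Complex.ofReal_im, zero_mul, one_mul, mul_zero,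
    add_zero, zero_add, mul_one] at him
  have := him.symm
  simpa [hT, hp] using this

end PartA


section PartB
variable {n : ℕ}

lemma grad_apply (u : ES n → ℝ) (y : ES n) (i : Fin n) :
    gradient u y i = dfun n u i y := by
  have h1 : (inner ℝ (gradient u y) (evec n i) : ℝ) = fderiv ℝ u y (evec n i) :=
    InnerProductSpace.toDual_symm_apply
  have h2 : (inner ℝ (gradient u y) (evec n i) : ℝ) = gradient u y i := by
    rw [evec, EuclideanSpace.inner_single_right]
    simp
  rw [← h2, h1]; rfl

lemma norm_grad_eq (u : ES n → ℝ) (y : ES n) :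
    ‖gradient u y‖ = Real.sqrt (∑ i, (dfun n u i y)^2) := by
  rw [EuclideanSpace.norm_eq]
  congr 1
  refine Finset.sum_congr rfl (fun i _ => ?_)
  rw [grad_apply, Real.norm_eq_abs, sq_abs]

end PartB

section PartBmain
variable {n : ℕ}

lemma partB {Ω : Set (ES n)} (hΩ : IsOpen Ω) {u : ES n → ℝ}
    (hu : ContDiffOn ℝ 3 u Ω) {x₀ : ES n} (hx₀ : x₀ ∈ Ω) (lam : Fin n → ℝ)
    (hdiag : Hess n u x₀ = Matrix.diagonal lam) (hDu : gradient u x₀ ≠ 0) (a : Fin n) :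
    pd2 n (fun y => ‖gradient u y‖) x₀ a a
      = (lam a ^ 2 + ∑ i, dfun n u i x₀ * Tco n u x₀ a a i) / ‖gradient u x₀‖
        - (dfun n u a x₀ * lam a) ^ 2 / ‖gradient u x₀‖ ^ 3 := by
  classical
  have hΩx : Ω ∈ nhds x₀ := hΩ.mem_nhds hx₀
  have hlam : ∀ i j, hfun n u i j x₀ = if i = j then lam i else 0 := by
    intro i j
    rw [← hfun_eq_hess hΩ hu hx₀, hdiag, Matrix.diagonal_apply]
  set q : ES n → ℝ := fun y => ∑ i, dfun n u i y * dfun n u i y with hq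
  have hfeq : (fun y : ES n => ‖gradient u y‖) = fun y => Real.sqrt (q y) := by
    funext y
    rw [norm_grad_eq, hq]
    congr 1
    exact Finset.sum_congr rfl (fun i _ => pow_two _)
  set r : ℝ := ‖gradient u x₀‖ with hr
  have hrpos : 0 < r := norm_pos_iff.mpr hDu
  have hq0 : q x₀ = r ^ 2 := by
    have h1 : Real.sqrt (q x₀) = r := (congrFun hfeq x₀).symm
    have h2 : 0 ≤ q x₀ := Finset.sum_nonneg (fun i _ => mul_self_nonneg _)
    rw [← h1, Real.sq_sqrt h2]
  have hqC : ∀ x ∈ Ω, ContDiffAt ℝ 2 q x := by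
    intro x hx
    exact ContDiffAt.sum (fun i _ =>
      (dfun_contDiffAt hΩ hu hx i).mul (dfun_contDiffAt hΩ hu hx i))
  have hqcont : ContinuousOn q Ω := fun x hx => ((hqC x hx).continuousAt).continuousWithinAt
  set Ω' : Set (ES n) := Ω ∩ q ⁻¹' (Set.Ioi 0) with hΩ'def
  have hΩ'open : IsOpen Ω' := hqcont.isOpen_inter_preimage hΩ isOpen_Ioi
  have hx₀' : x₀ ∈ Ω' := by
    refine ⟨hx₀, ?_⟩
    simp only [Set.mem_preimage, Set.mem_Ioi, hq0]
    positivity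
  have hΩ'n : Ω' ∈ nhds x₀ := hΩ'open.mem_nhds hx₀'
  have hdd : ∀ x ∈ Ω, ∀ i : Fin n, HasFDerivAt (dfun n u i) (fderiv ℝ (dfun n u i) x) x :=
    fun x hx i => ((dfun_contDiffAt hΩ hu hx i).differentiableAt (by norm_num)).hasFDerivAt
  have hqder : ∀ x ∈ Ω, HasFDerivAt q
      (∑ i, (dfun n u i x • fderiv ℝ (dfun n u i) x + dfun n u i x • fderiv ℝ (dfun n u i) x)) x :=
    fun x hx => HasFDerivAt.fun_sum (fun i _ => (hdd x hx i).mul (hdd x hx i))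
  set g : ES n → ℝ := fun y => (∑ i, dfun n u i y * hfun n u a i y) / Real.sqrt (q y) with hg
  have hfd : ∀ y ∈ Ω', fderiv ℝ (fun z : ES n => ‖gradient u z‖) y (evec n a) = g y := by
    intro y hy
    have hqy : (0:ℝ) < q y := hy.2
    have hsqy : Real.sqrt (q y) ≠ 0 := by positivity
    have hsq : HasFDerivAt (fun z => Real.sqrt (q z))
        ((1 / (2 * Real.sqrt (q y))) •
          (∑ i, (dfun n u i y • fderiv ℝ (dfun n u i) y + dfun n u i y • fderiv ℝ (dfun n u i) y))) y :=
      (Real.hasDerivAt_sqrt hqy.ne').comp_hasFDerivAt y (hqder y hy.1)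
    rw [hfeq, hsq.fderiv]
    simp only [ContinuousLinearMap.smul_apply, ContinuousLinearMap.sum_apply,
      ContinuousLinearMap.add_apply, smul_eq_mul]
    have hev : ∀ i : Fin n, (fderiv ℝ (dfun n u i) y) (evec n a) = hfun n u a i y := fun i => rfl
    rw [Finset.sum_congr rfl (fun i (_ : i ∈ Finset.univ) => by rw [hev i])]
    rw [show (∑ i, (dfun n u i y * hfun n u a i y + dfun n u i y * hfun n u a i y))
        = 2 * ∑ i, dfun n u i y * hfun n u a i y from by
      rw [Finset.sum_add_distrib, ← two_mul]]
    rw [hg]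
    field_simp
  have hfC2 : ContDiffAt ℝ 2 (fun y : ES n => ‖gradient u y‖) x₀ := by
    rw [hfeq]
    have h1 : ContDiffAt ℝ 2 Real.sqrt (q x₀) := Real.contDiffAt_sqrt (by rw [hq0]; positivity)
    exact h1.comp x₀ (hqC x₀ hx₀)
  rw [pd2_eq_fderiv hfC2]
  have hev2 : (fun y => fderiv ℝ (fun z : ES n => ‖gradient u z‖) y (evec n a)) =ᶠ[nhds x₀] g :=
    Filter.eventuallyEq_of_mem hΩ'n hfd
  rw [hev2.fderiv_eq]
  -- derivatives at x₀
  have hhd : ∀ i : Fin n, HasFDerivAt (hfun n u a i) (fderiv ℝ (hfun n u a i) x₀) x₀ :=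
    fun i => ((hfun_contDiffAt hΩ hu hx₀ a i).differentiableAt one_ne_zero).hasFDerivAt
  have hN : HasFDerivAt (fun y => ∑ i, dfun n u i y * hfun n u a i y)
      (∑ i, (dfun n u i x₀ • fderiv ℝ (hfun n u a i) x₀
        + hfun n u a i x₀ • fderiv ℝ (dfun n u i) x₀)) x₀ :=
    HasFDerivAt.fun_sum (fun i _ => (hdd x₀ hx₀ i).mul (hhd i))
  have hsqx : Real.sqrt (q x₀) = r := by rw [hq0, Real.sqrt_sq hrpos.le]
  have hqpos : (0:ℝ) < q x₀ := by rw [hq0]; positivity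
  have hD : HasFDerivAt (fun y => Real.sqrt (q y))
      ((1 / (2 * Real.sqrt (q x₀))) •
        (∑ i, (dfun n u i x₀ • fderiv ℝ (dfun n u i) x₀ + dfun n u i x₀ • fderiv ℝ (dfun n u i) x₀))) x₀ :=
    (Real.hasDerivAt_sqrt hqpos.ne').comp_hasFDerivAt x₀ (hqder x₀ hx₀)
  have hDne : Real.sqrt (q x₀) ≠ 0 := by rw [hsqx]; exact hrpos.ne'
  have hInv : HasFDerivAt (fun y => (Real.sqrt (q y))⁻¹)
      ((-((Real.sqrt (q x₀)) ^ 2)⁻¹) •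
        ((1 / (2 * Real.sqrt (q x₀))) •
          (∑ i, (dfun n u i x₀ • fderiv ℝ (dfun n u i) x₀ + dfun n u i x₀ • fderiv ℝ (dfun n u i) x₀)))) x₀ :=
    (hasDerivAt_inv hDne).comp_hasFDerivAt x₀ hD
  have hgder := hN.fun_mul hInv
  have hgeq : g = fun y => (∑ i, dfun n u i y * hfun n u a i y) * (Real.sqrt (q y))⁻¹ := by
    funext y
    exact div_eq_mul_inv _ _
  rw [hgeq, hgder.fderiv]
  -- evaluate at evec n a
  simp only [ContinuousLinearMap.add_apply, ContinuousLinearMap.smul_apply,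
    ContinuousLinearMap.sum_apply, smul_eq_mul]
  have hevd : ∀ i : Fin n, (fderiv ℝ (dfun n u i) x₀) (evec n a) = hfun n u a i x₀ := fun i => rfl
  have hevh : ∀ i : Fin n, (fderiv ℝ (hfun n u a i) x₀) (evec n a) = Tco n u x₀ a a i := fun i => rfl
  have hNval : (∑ i, dfun n u i x₀ * hfun n u a i x₀) = dfun n u a x₀ * lam a := by
    rw [Finset.sum_eq_single a]
    · rw [hlam a a, if_pos rfl]
    · intro m _ hm
      rw [hlam a m, if_neg (fun h => hm h.symm), mul_zero]
    · intro h; exact absurd (Finset.mem_univ a) h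
  have hsum1 : (∑ i, (dfun n u i x₀ * (fderiv ℝ (hfun n u a i) x₀) (evec n a)
      + hfun n u a i x₀ * (fderiv ℝ (dfun n u i) x₀) (evec n a)))
      = (∑ i, dfun n u i x₀ * Tco n u x₀ a a i) + lam a ^ 2 := by
    rw [Finset.sum_congr rfl (fun i (_ : i ∈ Finset.univ) => by rw [hevd i, hevh i])]
    rw [Finset.sum_add_distrib]
    congr 1
    rw [Finset.sum_eq_single a]
    · rw [hlam a a, if_pos rfl]; ring
    · intro m _ hm
      rw [hlam a m, if_neg (fun h => hm h.symm)]; ring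
    · intro h; exact absurd (Finset.mem_univ a) h
  have hsum2 : (∑ i, (dfun n u i x₀ * (fderiv ℝ (dfun n u i) x₀) (evec n a)
      + dfun n u i x₀ * (fderiv ℝ (dfun n u i) x₀) (evec n a)))
      = 2 * (dfun n u a x₀ * lam a) := by
    rw [Finset.sum_congr rfl (fun i (_ : i ∈ Finset.univ) => by rw [hevd i])]
    rw [Finset.sum_add_distrib, ← two_mul, hNval]
  rw [hsum1, hsum2, hNval, hsqx]
  field_simp
  ring

end PartBmain


/-- computation of `∑ gᵃᵃ ∂ₐₐ|Du|` at a diagonalization point, and the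
resulting lower bound. -/
theorem grad_norm_laplacian (n : ℕ) (Ω : Set (ES n)) (hΩ : IsOpen Ω) (x₀ : ES n)
    (hx₀ : x₀ ∈ Ω)
    (u ψ : ES n → ℝ) (lamF : ES n → Fin n → ℝ)
    (hu : ContDiffOn ℝ 3 u Ω) (hψ : ContDiffOn ℝ 1 ψ Ω)
    (heig : HessEig n u lamF Ω)
    (heq : ∀ x ∈ Ω, ∑ i, Real.arctan (lamF x i) = ψ x)
    (lam : Fin n → ℝ) (hdiag : Hess n u x₀ = Matrix.diagonal lam)
    (hDu : gradient u x₀ ≠ 0) :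
    (∑ a, (1 / (1 + lam a ^ 2)) * pd2 n (fun y => ‖gradient u y‖) x₀ a a) =
        (∑ i, pd1 n ψ x₀ i * pd1 n u x₀ i) / ‖gradient u x₀‖ +
          ∑ a, (1 / (1 + lam a ^ 2)) *
            ((‖gradient u x₀‖ ^ 2 - pd1 n u x₀ a ^ 2) * lam a ^ 2 / ‖gradient u x₀‖ ^ 3) ∧
      (∑ a, (1 / (1 + lam a ^ 2)) * pd2 n (fun y => ‖gradient u y‖) x₀ a a) ≥
        (∑ i, pd1 n ψ x₀ i * pd1 n u x₀ i) / ‖gradient u x₀‖ := by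
  classical
  set r : ℝ := ‖gradient u x₀‖ with hrdef
  have hrpos : 0 < r := norm_pos_iff.mpr hDu
  have hU : ∀ i, dfun n u i x₀ = pd1 n u x₀ i := fun i => rfl
  have hr2 : r ^ 2 = ∑ i, pd1 n u x₀ i ^ 2 := by
    have h1 : r = Real.sqrt (∑ i, (dfun n u i x₀)^2) := norm_grad_eq u x₀
    have h2 : (0:ℝ) ≤ ∑ i, (dfun n u i x₀)^2 := Finset.sum_nonneg (fun i _ => sq_nonneg _)
    rw [h1, Real.sq_sqrt h2]
    rfl
  -- Part B with symmetrized T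
  have key : ∀ a, pd2 n (fun y => ‖gradient u y‖) x₀ a a
      = (lam a ^ 2 + ∑ i, pd1 n u x₀ i * Tco n u x₀ i a a) / r
        - (pd1 n u x₀ a * lam a) ^ 2 / r ^ 3 := by
    intro a
    rw [partB hΩ hu hx₀ lam hdiag hDu a]
    rw [Finset.sum_congr rfl (fun i (_ : i ∈ Finset.univ) => by
      rw [Tco_rot hΩ hu hx₀ a i, hU i])]
    rfl
  -- Part A
  have hPA : ∀ i, pd1 n ψ x₀ i = ∑ a, Tco n u x₀ i a a * (1 / (1 + lam a ^ 2)) :=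
    fun i => partA hΩ hu hψ heig heq hx₀ lam hdiag i
  -- the three sums
  set S1 : ℝ := ∑ a, (1 / (1 + lam a ^ 2)) * lam a ^ 2 / r with hS1
  set S2 : ℝ := ∑ a, ∑ i, (1 / (1 + lam a ^ 2)) * (pd1 n u x₀ i * Tco n u x₀ i a a) / r with hS2
  set S3 : ℝ := ∑ a, (1 / (1 + lam a ^ 2)) * (pd1 n u x₀ a * lam a) ^ 2 / r ^ 3 with hS3
  have hLHS : (∑ a, (1 / (1 + lam a ^ 2)) * pd2 n (fun y => ‖gradient u y‖) x₀ a a)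
      = S1 + S2 - S3 := by
    rw [Finset.sum_congr rfl (fun a (_ : a ∈ Finset.univ) => by rw [key a])]
    have per_a : ∀ a : Fin n, (1 / (1 + lam a ^ 2))
        * ((lam a ^ 2 + ∑ i, pd1 n u x₀ i * Tco n u x₀ i a a) / r
          - (pd1 n u x₀ a * lam a) ^ 2 / r ^ 3)
        = ((1 / (1 + lam a ^ 2)) * lam a ^ 2 / r
            + ∑ i, (1 / (1 + lam a ^ 2)) * (pd1 n u x₀ i * Tco n u x₀ i a a) / r)
          - (1 / (1 + lam a ^ 2)) * (pd1 n u x₀ a * lam a) ^ 2 / r ^ 3 := by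
      intro a
      rw [← Finset.sum_div, ← Finset.mul_sum]
      have hne : (1 + lam a ^ 2) ≠ 0 := by positivity
      field_simp
    rw [Finset.sum_congr rfl (fun a (_ : a ∈ Finset.univ) => per_a a)]
    rw [Finset.sum_sub_distrib, Finset.sum_add_distrib]
  have hR1 : (∑ i, pd1 n ψ x₀ i * pd1 n u x₀ i) / r = S2 := by
    rw [hS2]
    rw [show (∑ a, ∑ i, (1 / (1 + lam a ^ 2)) * (pd1 n u x₀ i * Tco n u x₀ i a a) / r)
        = ∑ i, ∑ a, (1 / (1 + lam a ^ 2)) * (pd1 n u x₀ i * Tco n u x₀ i a a) / r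
      from Finset.sum_comm]
    rw [Finset.sum_congr rfl (fun i (_ : i ∈ Finset.univ) => by rw [hPA i])]
    rw [Finset.sum_div]
    refine Finset.sum_congr rfl (fun i _ => ?_)
    rw [Finset.sum_mul, Finset.sum_div]
    exact Finset.sum_congr rfl (fun a _ => by ring)
  have hR2 : (∑ a, (1 / (1 + lam a ^ 2)) * ((r ^ 2 - pd1 n u x₀ a ^ 2) * lam a ^ 2 / r ^ 3))
      = S1 - S3 := by
    rw [hS1, hS3, ← Finset.sum_sub_distrib]
    refine Finset.sum_congr rfl (fun a _ => ?_)
    have hne : (1 + lam a ^ 2) ≠ 0 := by positivity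
    field_simp
  have hmain : (∑ a, (1 / (1 + lam a ^ 2)) * pd2 n (fun y => ‖gradient u y‖) x₀ a a) =
      (∑ i, pd1 n ψ x₀ i * pd1 n u x₀ i) / r +
        ∑ a, (1 / (1 + lam a ^ 2)) * ((r ^ 2 - pd1 n u x₀ a ^ 2) * lam a ^ 2 / r ^ 3) := by
    rw [hLHS, hR1, hR2]
    ring
  refine ⟨hmain, ?_⟩
  rw [hmain, ge_iff_le, le_add_iff_nonneg_right]
  refine Finset.sum_nonneg (fun a _ => ?_)
  have hub : pd1 n u x₀ a ^ 2 ≤ r ^ 2 := by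
    rw [hr2]
    exact Finset.single_le_sum (fun i _ => sq_nonneg (pd1 n u x₀ i)) (Finset.mem_univ a)
  have h1 : (0:ℝ) ≤ (r ^ 2 - pd1 n u x₀ a ^ 2) := by linarith
  have h2 : (0:ℝ) < 1 + lam a ^ 2 := by positivity
  have h3 : (0:ℝ) < r ^ 3 := by positivity
  positivity
end
end

section
/- Let m and n be integers with 1 ≤ m ≤ n and n ≥ 2, and let ε be a real number with 0 < ε ≤ 2 − m/n − √((1 − m/n)² + 4/n). Then ε < 1 and 1/(1−ε) + (m−1)/(3−ε) ≤ n/2. -/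
open Real Metric Finset MeasureTheory Matrix

noncomputable section

/-- the elementary inequality used to fix the Jacobi constant `ε(n)`. -/
theorem epsilon_choice (m n : ℕ) (hm : 1 ≤ m) (hmn : m ≤ n) (hn : 2 ≤ n) (ε : ℝ)
    (hε0 : 0 < ε)
    (hε : ε ≤ 2 - (m : ℝ) / n - Real.sqrt ((1 - (m : ℝ) / n) ^ 2 + 4 / n)) :
    ε < 1 ∧ 1 / (1 - ε) + ((m : ℝ) - 1) / (3 - ε) ≤ (n : ℝ) / 2 := by
  have hn' : (2:ℝ) ≤ n := by exact_mod_cast hn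
  have hm' : (1:ℝ) ≤ m := by exact_mod_cast hm
  have hmn' : (m:ℝ) ≤ n := by exact_mod_cast hmn
  have hnpos : (0:ℝ) < n := by linarith
  set S := Real.sqrt ((1 - (m : ℝ) / n) ^ 2 + 4 / n) with hSdef
  have hS0 : 0 ≤ S := Real.sqrt_nonneg _
  have hSsq : S ^ 2 = (1 - (m : ℝ) / n) ^ 2 + 4 / n := by
    rw [hSdef, Real.sq_sqrt]
    positivity
  have htle : (m:ℝ)/n ≤ 1 := by
    rw [div_le_one hnpos]; exact hmn'
  have hS1 : 1 - (m:ℝ)/n < S := by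
    nlinarith [div_pos (by norm_num : (0:ℝ) < 4) hnpos]
  have hε1 : ε < 1 := by linarith
  refine ⟨hε1, ?_⟩
  have h1 : (0:ℝ) < 1 - ε := by linarith
  have h3 : (0:ℝ) < 3 - ε := by linarith
  have hkey : (1 - (m : ℝ) / n) ^ 2 + 4 / n ≤ (2 - (m:ℝ)/n - ε)^2 := by
    nlinarith
  rw [div_add_div _ _ (ne_of_gt h1) (ne_of_gt h3), div_le_div_iff₀ (by positivity) (by norm_num)]
  have h7 : ((n:ℝ)-m)^2 + 4*n ≤ (2*n-m-n*ε)^2 := by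
    have e4 : (n:ℝ)^2 * ((1 - (m : ℝ) / n) ^ 2 + 4 / n) = ((n:ℝ)-m)^2 + 4*n := by
      field_simp
    have e5 : (n:ℝ)^2 * ((2 - (m:ℝ)/n - ε)^2) = (2*n-m-n*ε)^2 := by
      field_simp
    rw [← e4, ← e5]
    nlinarith [sq_nonneg (n:ℝ)]
  have hq : 0 ≤ (n:ℝ) * ε^2 - (4*n - 2*m)*ε + (3*n - 2*m - 4) := by
    nlinarith [h7, hnpos]
  nlinarith
end
end

section
/- For any real numbers λ₁, …, λₙ (n ≥ 1), writing V = ∏_{j=1}^n √(1+λⱼ²) and ψ = ∑_{j=1}^n arctan λⱼ, one has ∑_{i=1}^n V/(1+λᵢ²) = cos ψ · ∑_{1 ≤ 2k+1 ≤ n} (−1)^k (n−2k) σ_{2k}(λ) − sin ψ · ∑_{0 ≤ 2k ≤ n} (−1)^k (n−2k+1) σ_{2k−1}(λ). -/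
open Real Metric Finset MeasureTheory Matrix

noncomputable section

lemma one_sub_mul_I (a : ℝ) :
    (1 : ℂ) - a * Complex.I =
      (Real.sqrt (1 + a ^ 2) : ℂ) * Complex.exp ((-Real.arctan a : ℝ) * Complex.I) := by
  have h0 : Real.sqrt (1 + a ^ 2) ≠ 0 := by positivity
  rw [Complex.exp_mul_I, ← Complex.ofReal_cos, ← Complex.ofReal_sin,
    Real.cos_neg, Real.sin_neg, Real.cos_arctan, Real.sin_arctan]
  push_cast
  have h1 : ((Real.sqrt (1 + a ^ 2) : ℝ) : ℂ) ≠ 0 := by exact_mod_cast h0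
  field_simp
  ring

lemma prod_one_sub_mul_I (n : ℕ) (lam : Fin n → ℝ) :
    ∏ j, ((1 : ℂ) - lam j * Complex.I) =
      ((∏ j, Real.sqrt (1 + lam j ^ 2) : ℝ) : ℂ) *
        Complex.exp ((-(∑ j, Real.arctan (lam j)) : ℝ) * Complex.I) := by
  simp_rw [one_sub_mul_I]
  rw [Finset.prod_mul_distrib, ← Complex.exp_sum]
  push_cast
  congr 1
  rw [← Finset.sum_mul]
  congr 1
  rw [← Finset.sum_neg_distrib]

lemma prod_one_add_eq (n : ℕ) (c : Fin n → ℂ) (t : Finset (Fin n)) :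
    ∏ j ∈ t, (1 + c j) = ∑ s ∈ t.powerset, ∏ j ∈ s, c j := by
  simp_rw [add_comm (1 : ℂ)]
  rw [Finset.prod_add]
  simp

lemma sum_prod_erase (n : ℕ) (c : Fin n → ℂ) :
    ∑ i, ∏ j ∈ Finset.univ.erase i, (1 + c j) =
      ∑ k ∈ Finset.range (n + 1), ((n : ℂ) - k) *
        ∑ s ∈ Finset.powersetCard k (Finset.univ : Finset (Fin n)), ∏ j ∈ s, c j := by
  classical
  have h1 : ∀ i : Fin n, (Finset.univ.erase i).powerset =
      (Finset.univ : Finset (Fin n)).powerset.filter (fun s => i ∉ s) := by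
    intro i
    ext s
    simp [Finset.subset_erase]
  simp_rw [prod_one_add_eq, h1, Finset.sum_filter]
  rw [Finset.sum_comm]
  have h2 : ∀ s : Finset (Fin n),
      (∑ i : Fin n, if i ∉ s then (∏ j ∈ s, c j) else 0) =
        ((n : ℂ) - s.card) * ∏ j ∈ s, c j := by
    intro s
    have hle : s.card ≤ n := by simpa using Finset.card_le_univ s
    rw [Finset.sum_ite, Finset.sum_const_zero, add_zero, Finset.sum_const, nsmul_eq_mul]
    congr 1
    have hs : (Finset.univ.filter (fun i => i ∉ s)) = sᶜ := by ext i; simp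
    rw [hs, Finset.card_compl, Fintype.card_fin, Nat.cast_sub hle]
  simp_rw [h2]
  rw [Finset.powerset_card_disjiUnion]
  erw [Finset.sum_disjiUnion]
  rw [Finset.card_univ, Fintype.card_fin]
  refine Finset.sum_congr rfl fun k hk => ?_
  rw [Finset.mul_sum]
  refine Finset.sum_congr rfl fun t ht => ?_
  rw [(Finset.mem_powersetCard.mp ht).2]

lemma evenpart (n : ℕ) (σ : ℕ → ℂ) :
    ∑ k ∈ (Finset.range (n + 1)).filter (fun k => k % 2 = 0),
        ((n : ℂ) - k) * (-Complex.I) ^ k * σ k =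
      ∑ k ∈ Finset.range ((n + 1) / 2), (-1 : ℂ) ^ k * ((n : ℂ) - 2 * k) * σ (2 * k) := by
  have himg : (Finset.range (n + 1)).filter (fun k => k % 2 = 0) =
      (Finset.range (n / 2 + 1)).image (fun m => 2 * m) := by
    ext k
    simp only [Finset.mem_filter, Finset.mem_range, Finset.mem_image]
    constructor
    · rintro ⟨hk, hk2⟩; exact ⟨k / 2, by omega, by omega⟩
    · rintro ⟨m, hm, rfl⟩; omega
  rw [himg, Finset.sum_image (fun a _ b _ h => by omega)]
  rw [← Finset.sum_subset (Finset.range_subset_range.mpr (by omega : (n + 1) / 2 ≤ n / 2 + 1))]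
  · refine Finset.sum_congr rfl fun m _ => ?_
    have : (-Complex.I) ^ (2 * m) = (-1) ^ m := by
      rw [pow_mul]
      norm_num [Complex.I_sq]
    rw [this]
    push_cast
    ring
  · intro m hm hm2
    simp only [Finset.mem_range] at hm hm2
    have hn : n = 2 * m := by omega
    have : ((n : ℂ) - (2 * m : ℕ)) = 0 := by rw [hn]; push_cast; ring
    rw [this]
    ring

lemma oddpart (n : ℕ) (σ : ℕ → ℂ) :
    ∑ k ∈ (Finset.range (n + 1)).filter (fun k => ¬ k % 2 = 0),
        ((n : ℂ) - k) * (-Complex.I) ^ k * σ k =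
      (∑ k ∈ Finset.range (n / 2 + 1), (-1 : ℂ) ^ k * ((n : ℂ) - 2 * k + 1) *
        (if k = 0 then 0 else σ (2 * k - 1))) * Complex.I := by
  have himg : (Finset.range (n + 1)).filter (fun k => ¬ k % 2 = 0) =
      (Finset.range ((n + 1) / 2)).image (fun m => 2 * m + 1) := by
    ext k
    simp only [Finset.mem_filter, Finset.mem_range, Finset.mem_image]
    constructor
    · rintro ⟨hk, hk2⟩; exact ⟨k / 2, by omega, by omega⟩
    · rintro ⟨m, hm, rfl⟩; omega
  rw [himg, Finset.sum_image (fun a _ b _ h => by omega)]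
  rw [Finset.sum_range_succ']
  have h2 : ∀ m : ℕ, 2 * (m + 1) - 1 = 2 * m + 1 := fun m => by omega
  norm_num
  rw [Finset.sum_mul]
  rw [← Finset.sum_subset (Finset.range_subset_range.mpr (by omega : n / 2 ≤ (n + 1) / 2))]
  · refine (Finset.sum_congr rfl fun m _ => ?_).symm
    rw [show 2 * (m + 1) - 1 = 2 * m + 1 from by omega]
    have hI : (-Complex.I) ^ (2 * m + 1) = (-1) ^ m * (-Complex.I) := by
      rw [pow_succ, pow_mul]
      norm_num [Complex.I_sq]
    rw [hI]
    push_cast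
    ring
  · intro m hm hm2
    simp only [Finset.mem_range] at hm hm2
    have hn : n = 2 * m + 1 := by omega
    have : ((n : ℂ) - (2 * m + 1)) = 0 := by rw [hn]; push_cast; ring
    push_cast
    rw [this]
    ring

lemma sum_prod_erase_eq (n : ℕ) (lam : Fin n → ℝ) :
    ∑ i, ∏ j ∈ Finset.univ.erase i, ((1 : ℂ) - lam j * Complex.I) =
      ((∑ k ∈ Finset.range ((n + 1) / 2),
          (-1 : ℝ) ^ k * ((n : ℝ) - 2 * k) * esymmR n (2 * k) lam : ℝ) : ℂ) +
        ((∑ k ∈ Finset.range (n / 2 + 1),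
          (-1 : ℝ) ^ k * ((n : ℝ) - 2 * k + 1) *
            (if k = 0 then 0 else esymmR n (2 * k - 1) lam) : ℝ) : ℂ) * Complex.I := by
  have key := sum_prod_erase n (fun j => (lam j : ℂ) * (-Complex.I))
  simp only [mul_neg, ← sub_eq_add_neg] at key
  rw [key]
  have hσ : ∀ k, ((n : ℂ) - k) * ∑ s ∈ Finset.powersetCard k (Finset.univ : Finset (Fin n)),
      ∏ j ∈ s, (-((lam j : ℂ) * Complex.I)) =
        ((n : ℂ) - k) * (-Complex.I) ^ k * ((esymmR n k lam : ℝ) : ℂ) := by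
    intro k
    simp only [← mul_neg]
    have : ∑ s ∈ Finset.powersetCard k (Finset.univ : Finset (Fin n)),
        ∏ j ∈ s, ((lam j : ℂ) * (-Complex.I)) =
          ((esymmR n k lam : ℝ) : ℂ) * (-Complex.I) ^ k := by
      rw [esymmR]
      push_cast
      rw [Finset.sum_mul]
      refine Finset.sum_congr rfl fun s hs => ?_
      rw [Finset.prod_mul_distrib, Finset.prod_const, (Finset.mem_powersetCard.mp hs).2]
    rw [this]; ring
  rw [Finset.sum_congr rfl (fun k _ => hσ k)]
  rw [← Finset.sum_filter_add_sum_filter_not (Finset.range (n + 1)) (fun k => k % 2 = 0)]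
  rw [evenpart n (fun k => ((esymmR n k lam : ℝ) : ℂ)),
    oddpart n (fun k => ((esymmR n k lam : ℝ) : ℂ))]
  push_cast
  congr 2
  refine Finset.sum_congr rfl fun k _ => ?_
  split_ifs <;> simp

lemma exp_mul_prod_erase (n : ℕ) (lam : Fin n → ℝ) (i : Fin n) :
    Complex.exp ((∑ j, Real.arctan (lam j) : ℝ) * Complex.I) *
        ∏ j ∈ Finset.univ.erase i, ((1 : ℂ) - lam j * Complex.I) =
      (((∏ j, Real.sqrt (1 + lam j ^ 2)) / (1 + lam i ^ 2) : ℝ) : ℂ) *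
        (1 + lam i * Complex.I) := by
  have hpos : (0 : ℝ) < 1 + lam i ^ 2 := by positivity
  have hfact : ((1 : ℂ) - lam i * Complex.I) * ((1 : ℂ) + lam i * Complex.I) =
      ((1 + lam i ^ 2 : ℝ) : ℂ) := by
    have h2 : (Complex.I) ^ 2 = -1 := Complex.I_sq
    push_cast
    ring_nf
    rw [h2]
    ring
  have hc : ((1 + lam i ^ 2 : ℝ) : ℂ) ≠ 0 := by
    exact_mod_cast hpos.ne'
  have hne : ((1 : ℂ) - lam i * Complex.I) ≠ 0 := fun h => hc (by rw [← hfact, h, zero_mul])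
  have h1 : ((1 : ℂ) - lam i * Complex.I) *
      ∏ j ∈ Finset.univ.erase i, ((1 : ℂ) - lam j * Complex.I) =
      ((∏ j, Real.sqrt (1 + lam j ^ 2) : ℝ) : ℂ) *
        Complex.exp ((-(∑ j, Real.arctan (lam j)) : ℝ) * Complex.I) := by
    rw [Finset.mul_prod_erase Finset.univ (fun j => (1 : ℂ) - lam j * Complex.I)
      (Finset.mem_univ i)]
    exact prod_one_sub_mul_I n lam
  have hexp : Complex.exp ((∑ j, Real.arctan (lam j) : ℝ) * Complex.I) *
      Complex.exp ((-(∑ j, Real.arctan (lam j)) : ℝ) * Complex.I) = 1 := by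
    rw [← Complex.exp_add]
    have : ((∑ j, Real.arctan (lam j) : ℝ) : ℂ) * Complex.I +
        ((-(∑ j, Real.arctan (lam j)) : ℝ) : ℂ) * Complex.I = 0 := by push_cast; ring
    rw [this, Complex.exp_zero]
  have hVc : (((∏ j, Real.sqrt (1 + lam j ^ 2)) / (1 + lam i ^ 2) : ℝ) : ℂ) *
      ((1 + lam i ^ 2 : ℝ) : ℂ) = ((∏ j, Real.sqrt (1 + lam j ^ 2) : ℝ) : ℂ) := by
    rw [← Complex.ofReal_mul, div_mul_cancel₀ _ hpos.ne']
  apply mul_left_cancel₀ hne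
  linear_combination Complex.exp ((∑ j, Real.arctan (lam j) : ℝ) * Complex.I) * h1 +
    ((∏ j, Real.sqrt (1 + lam j ^ 2) : ℝ) : ℂ) * hexp -
    (((∏ j, Real.sqrt (1 + lam j ^ 2)) / (1 + lam i ^ 2) : ℝ) : ℂ) * hfact - hVc

/-- the trace of the conformality identity:
`∑ᵢ V/(1+λᵢ²) = cos ψ ∑ (−1)^k (n−2k) σ_{2k} − sin ψ ∑ (−1)^k (n−2k+1) σ_{2k−1}`. -/
theorem trace_conformality (n : ℕ) (hn : 1 ≤ n) (lam : Fin n → ℝ) :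
    ∑ i, (∏ j, Real.sqrt (1 + lam j ^ 2)) / (1 + lam i ^ 2) =
      Real.cos (∑ j, Real.arctan (lam j)) *
          (∑ k ∈ Finset.range ((n + 1) / 2),
            (-1 : ℝ) ^ k * ((n : ℝ) - 2 * k) * esymmR n (2 * k) lam) -
        Real.sin (∑ j, Real.arctan (lam j)) *
          (∑ k ∈ Finset.range (n / 2 + 1),
            (-1 : ℝ) ^ k * ((n : ℝ) - 2 * k + 1) *
              (if k = 0 then 0 else esymmR n (2 * k - 1) lam)) := by
  have hT : Complex.exp ((∑ j, Real.arctan (lam j) : ℝ) * Complex.I) *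
      ∑ i, ∏ j ∈ Finset.univ.erase i, ((1 : ℂ) - lam j * Complex.I) =
      ∑ i, (((∏ j, Real.sqrt (1 + lam j ^ 2)) / (1 + lam i ^ 2) : ℝ) : ℂ) *
        (1 + lam i * Complex.I) := by
    rw [Finset.mul_sum]
    exact Finset.sum_congr rfl fun i _ => exp_mul_prod_erase n lam i
  have hre1 : (Complex.exp ((∑ j, Real.arctan (lam j) : ℝ) * Complex.I) *
      ∑ i, ∏ j ∈ Finset.univ.erase i, ((1 : ℂ) - lam j * Complex.I)).re =
      ∑ i, (∏ j, Real.sqrt (1 + lam j ^ 2)) / (1 + lam i ^ 2) := by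
    rw [hT, Complex.re_sum]
    refine Finset.sum_congr rfl fun i _ => ?_
    simp only [Complex.mul_re, Complex.mul_im, Complex.add_re, Complex.add_im,
      Complex.ofReal_re, Complex.ofReal_im, Complex.one_re, Complex.one_im,
      Complex.I_re, Complex.I_im]
    ring
  rw [← hre1, sum_prod_erase_eq, Complex.exp_mul_I, ← Complex.ofReal_cos, ← Complex.ofReal_sin]
  simp only [Complex.mul_re, Complex.mul_im, Complex.add_re, Complex.add_im,
    Complex.ofReal_re, Complex.ofReal_im, Complex.I_re, Complex.I_im]
  ring
end
end

section
/- Let A be a C² map from an open interval around 0 into the n×n real symmetric matrices such that A(0) = diag(λ₁,…,λₙ) is diagonal and λ₁ is a simple eigenvalue of A(0) (λ₁ ≠ λ_k for all k ≥ 2). Let Λ be a C² real-valued function on a neighborhood of 0 such that Λ(t) is an eigenvalue of A(t) for every t and Λ(0) = λ₁. Then Λ'(0) = A'(0)₁₁ and Λ''(0) = A''(0)₁₁ + 2 ∑_{k=2}^n (A'(0)_{1k})² / (λ₁ − λ_k). -/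
open Real Metric Finset MeasureTheory Matrix

noncomputable section

lemma perm_eq_one_of_fix {α : Type*} (σ : Equiv.Perm α) (i : α)
    (h : ∀ j, j ≠ i → σ j = j) : σ = 1 := by
  have hi : σ i = i := by
    by_contra hne
    exact hne (σ.injective (h (σ i) hne))
  ext j
  by_cases hj : j = i
  · subst hj; simpa using hi
  · simpa using h j hj

lemma perm_eq_swap_of_fix {α : Type*} [DecidableEq α] (σ : Equiv.Perm α) (i j : α)
    (hij : i ≠ j) (h : ∀ k, k ≠ i → k ≠ j → σ k = k) : σ = 1 ∨ σ = Equiv.swap i j := by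
  by_cases hi : σ i = i
  · left
    refine perm_eq_one_of_fix σ j fun k hkj => ?_
    by_cases hki : k = i
    · subst hki; exact hi
    · exact h k hki hkj
  · right
    have hσi : σ i = j := by
      by_contra hne
      exact hi (σ.injective (h (σ i) hi hne))
    have hσj : σ j = i := by
      have hji : σ j ≠ j := fun hjj => hij (σ.injective (hσi.trans hjj.symm))
      by_contra hne
      exact hji (σ.injective (h (σ j) hne hji))
    ext k
    by_cases hki : k = i
    · subst hki; simp [hσi, Equiv.swap_apply_left]
    by_cases hkj : k = j
    · subst hkj; simp [hσj, Equiv.swap_apply_right]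
    · simp [h k hki hkj, Equiv.swap_apply_of_ne_of_ne hki hkj]

/-- first and second derivatives of a simple eigenvalue of a C² family
of symmetric matrices. -/
theorem eigenvalue_perturbation (n : ℕ) (hn : 1 ≤ n) (ε : ℝ) (hε : 0 < ε)
    (A : ℝ → Matrix (Fin n) (Fin n) ℝ)
    (hA : ∀ i j : Fin n, ContDiffOn ℝ 2 (fun t => A t i j) (ball (0 : ℝ) ε))
    (hsymm : ∀ t ∈ ball (0 : ℝ) ε, (A t).IsSymm)
    (lam : Fin n → ℝ) (hA0 : A 0 = Matrix.diagonal lam)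
    (hsimple : ∀ k : Fin n, k ≠ ⟨0, by omega⟩ → lam k ≠ lam ⟨0, by omega⟩)
    (Λ : ℝ → ℝ) (hΛ : ContDiffOn ℝ 2 Λ (ball (0 : ℝ) ε))
    (hΛeig : ∀ t ∈ ball (0 : ℝ) ε, ∃ v : Fin n → ℝ, v ≠ 0 ∧ A t *ᵥ v = Λ t • v)
    (hΛ0 : Λ 0 = lam ⟨0, by omega⟩) :
    deriv Λ 0 = deriv (fun t => A t ⟨0, by omega⟩ ⟨0, by omega⟩) 0 ∧
      iteratedDeriv 2 Λ 0 =
        iteratedDeriv 2 (fun t => A t ⟨0, by omega⟩ ⟨0, by omega⟩) 0 +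
          2 * ∑ k ∈ Finset.univ.erase (⟨0, by omega⟩ : Fin n),
            (deriv (fun t => A t ⟨0, by omega⟩ k) 0) ^ 2 / (lam ⟨0, by omega⟩ - lam k) := by
  classical
  have hn0 : 0 < n := hn
  set i0 : Fin n := ⟨0, hn0⟩ with hi0def
  set s : Set ℝ := ball (0 : ℝ) ε with hsdef
  have hso : IsOpen s := isOpen_ball
  have h0s : (0 : ℝ) ∈ s := mem_ball_self hε
  have hsnhds : s ∈ nhds (0 : ℝ) := hso.mem_nhds h0s
  have hsimple' : ∀ k : Fin n, k ≠ i0 → lam k ≠ lam i0 := hsimple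
  -- the matrix-entry functions of A t - Λ t • 1
  set b : Fin n → Fin n → ℝ → ℝ := fun i j t => A t i j - (if i = j then Λ t else 0) with hbdef
  have hbC : ∀ i j, ContDiffOn ℝ 2 (b i j) s := by
    intro i j
    by_cases h : i = j
    · simpa [hbdef, h] using (hA i j).sub hΛ
    · simpa [hbdef, h] using hA i j
  have hbd1 : ∀ (i j : Fin n), ∀ t ∈ s, HasDerivAt (b i j) (deriv (b i j) t) t := by
    intro i j t ht
    exact (((hbC i j).differentiableOn (by norm_num)).differentiableAt
      (hso.mem_nhds ht)).hasDerivAt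
  have hbd2 : ∀ i j : Fin n, DifferentiableAt ℝ (deriv (b i j)) 0 := by
    intro i j
    exact (((hbC i j).deriv_of_isOpen (m := 1) hso (by norm_num)).differentiableOn
      (by norm_num)).differentiableAt hsnhds
  have hb0 : ∀ i j : Fin n, b i j 0 = if i = j then lam j - lam i0 else 0 := by
    intro i j
    simp only [hbdef, hA0, Matrix.diagonal_apply, hΛ0]
    by_cases h : i = j <;> simp [h]
  -- the determinant vanishes on s
  have hF0 : ∀ t ∈ s,
      (∑ σ : Equiv.Perm (Fin n), ((Equiv.Perm.sign σ : ℤ) : ℝ) * ∏ i, b (σ i) i t) = 0 := by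
    intro t ht
    have hdet : (Matrix.of fun i j => b i j t).det = 0 := by
      rw [← Matrix.exists_mulVec_eq_zero_iff]
      obtain ⟨v, hv, hAv⟩ := hΛeig t ht
      refine ⟨v, hv, ?_⟩
      have hMeq : (Matrix.of fun i j => b i j t) = A t - Λ t • (1 : Matrix (Fin n) (Fin n) ℝ) := by
        ext i j
        simp [hbdef, Matrix.one_apply, mul_ite, mul_one, mul_zero]
      rw [hMeq, Matrix.sub_mulVec, Matrix.smul_mulVec, Matrix.one_mulVec, hAv, sub_self]
    rw [Matrix.det_apply'] at hdet
    simpa using hdet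
  -- first derivative of each permutation product
  set Q : Equiv.Perm (Fin n) → ℝ → ℝ :=
    fun σ t => ∑ i, (∏ j ∈ Finset.univ.erase i, b (σ j) j t) * deriv (b (σ i) i) t with hQdef
  have hPd : ∀ (σ : Equiv.Perm (Fin n)), ∀ t ∈ s,
      HasDerivAt (fun u => ∏ i, b (σ i) i u) (Q σ t) t := by
    intro σ t ht
    have h := HasDerivAt.fun_finsetProd (u := (Finset.univ : Finset (Fin n)))
      (f := fun i u => b (σ i) i u) (f' := fun i => deriv (b (σ i) i) t)
      (fun i _ => hbd1 (σ i) i t ht)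
    simpa [hQdef, smul_eq_mul] using h
  set G : ℝ → ℝ :=
    fun t => ∑ σ : Equiv.Perm (Fin n), ((Equiv.Perm.sign σ : ℤ) : ℝ) * Q σ t with hGdef
  have hG0 : ∀ t ∈ s, G t = 0 := by
    intro t ht
    have h1 : HasDerivAt
        (fun u => ∑ σ : Equiv.Perm (Fin n), ((Equiv.Perm.sign σ : ℤ) : ℝ) * ∏ i, b (σ i) i u)
        (G t) t := HasDerivAt.fun_sum fun σ _ => ((hPd σ t ht).const_mul _)
    have h2 : (fun u => ∑ σ : Equiv.Perm (Fin n),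
        ((Equiv.Perm.sign σ : ℤ) : ℝ) * ∏ i, b (σ i) i u) =ᶠ[nhds t] fun _ => (0 : ℝ) := by
      filter_upwards [hso.mem_nhds ht] with u hu using hF0 u hu
    have h3 : HasDerivAt (fun _ : ℝ => (0 : ℝ)) (G t) t := h1.congr_of_eventuallyEq h2.symm
    simpa using h3.deriv.symm
  -- second derivative data
  set Q' : Equiv.Perm (Fin n) → ℝ := fun σ => ∑ i,
      ((∑ j ∈ Finset.univ.erase i,
          (∏ k ∈ (Finset.univ.erase i).erase j, b (σ k) k 0) * deriv (b (σ j) j) 0)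
          * deriv (b (σ i) i) 0
        + (∏ j ∈ Finset.univ.erase i, b (σ j) j 0) * deriv (deriv (b (σ i) i)) 0) with hQ'def
  have hQd : ∀ σ : Equiv.Perm (Fin n), HasDerivAt (Q σ) (Q' σ) 0 := by
    intro σ
    refine HasDerivAt.fun_sum fun i _ => ?_
    have hprod : HasDerivAt (fun t => ∏ j ∈ Finset.univ.erase i, b (σ j) j t)
        (∑ j ∈ Finset.univ.erase i,
          (∏ k ∈ (Finset.univ.erase i).erase j, b (σ k) k 0) * deriv (b (σ j) j) 0) 0 := by
      have h := HasDerivAt.fun_finsetProd (u := Finset.univ.erase i)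
        (f := fun j u => b (σ j) j u) (f' := fun j => deriv (b (σ j) j) 0)
        (fun j _ => hbd1 (σ j) j 0 h0s)
      simpa [smul_eq_mul] using h
    exact hprod.mul ((hbd2 (σ i) i).hasDerivAt)
  have hGd : HasDerivAt G (∑ σ : Equiv.Perm (Fin n), ((Equiv.Perm.sign σ : ℤ) : ℝ) * Q' σ) 0 :=
    HasDerivAt.fun_sum fun σ _ => (hQd σ).const_mul _
  have hG'0 : (∑ σ : Equiv.Perm (Fin n), ((Equiv.Perm.sign σ : ℤ) : ℝ) * Q' σ) = 0 := by
    have h2 : G =ᶠ[nhds 0] fun _ => (0 : ℝ) := by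
      filter_upwards [hsnhds] with u hu using hG0 u hu
    have h3 : HasDerivAt (fun _ : ℝ => (0 : ℝ))
        (∑ σ : Equiv.Perm (Fin n), ((Equiv.Perm.sign σ : ℤ) : ℝ) * Q' σ) 0 :=
      hGd.congr_of_eventuallyEq h2.symm
    simpa using h3.deriv.symm
  -- product vanishing lemma
  have hpz : ∀ (σ : Equiv.Perm (Fin n)) (u : Finset (Fin n)) (k : Fin n), k ∈ u →
      (σ k ≠ k ∨ k = i0) → (∏ j ∈ u, b (σ j) j 0) = 0 := by
    intro σ u k hk hcase
    refine Finset.prod_eq_zero hk ?_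
    rcases hcase with h | h
    · rw [hb0, if_neg h]
    · subst h
      rw [hb0]
      split <;> simp
  have hpz1 : ∀ (u : Finset (Fin n)), i0 ∈ u → (∏ j ∈ u, b j j 0) = 0 := by
    intro u hu
    simpa using hpz 1 u i0 hu (Or.inr rfl)
  -- differentiability of the raw data
  have hAdiff : ∀ (i j : Fin n), ∀ t ∈ s, DifferentiableAt ℝ (fun u => A u i j) t := by
    intro i j t ht
    exact ((hA i j).differentiableOn (by norm_num)).differentiableAt (hso.mem_nhds ht)
  have hΛdiff : ∀ t ∈ s, DifferentiableAt ℝ Λ t := by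
    intro t ht
    exact (hΛ.differentiableOn (by norm_num)).differentiableAt (hso.mem_nhds ht)
  have hAd2 : ∀ i j : Fin n, DifferentiableAt ℝ (deriv (fun t => A t i j)) 0 := by
    intro i j
    exact (((hA i j).deriv_of_isOpen (m := 1) hso (by norm_num)).differentiableOn
      (by norm_num)).differentiableAt hsnhds
  have hΛd2 : DifferentiableAt ℝ (deriv Λ) 0 :=
    ((hΛ.deriv_of_isOpen (m := 1) hso (by norm_num)).differentiableOn
      (by norm_num)).differentiableAt hsnhds
  -- PART 1
  have hQ0ne : ∀ σ : Equiv.Perm (Fin n), σ ≠ 1 → Q σ 0 = 0 := by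
    intro σ hσ
    simp only [hQdef]
    refine Finset.sum_eq_zero fun i _ => ?_
    obtain ⟨k, hki, hk⟩ : ∃ k, k ≠ i ∧ σ k ≠ k := by
      by_contra h
      push_neg at h
      exact hσ (perm_eq_one_of_fix σ i h)
    rw [hpz σ _ k (Finset.mem_erase.2 ⟨hki, Finset.mem_univ k⟩) (Or.inl hk), zero_mul]
  set P : ℝ := ∏ j ∈ Finset.univ.erase i0, (lam j - lam i0) with hPdef
  have hPne : P ≠ 0 := by
    rw [hPdef, Finset.prod_ne_zero_iff]
    intro a ha
    exact sub_ne_zero_of_ne (hsimple' a (Finset.mem_erase.1 ha).1)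
  have hbdiagprod : ∀ u : Finset (Fin n),
      (∏ j ∈ u, b j j 0) = ∏ j ∈ u, (lam j - lam i0) := by
    intro u
    exact Finset.prod_congr rfl fun j _ => by rw [hb0, if_pos rfl]
  have hQ10 : Q 1 0 = P * deriv (b i0 i0) 0 := by
    simp only [hQdef, Equiv.Perm.one_apply]
    rw [Fintype.sum_eq_single i0 ?_]
    · rw [hbdiagprod]
    · intro i hi
      rw [hpz1 _ (Finset.mem_erase.2 ⟨Ne.symm hi, Finset.mem_univ i0⟩), zero_mul]
  have hc00 : deriv (b i0 i0) 0 = 0 := by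
    have h : (∑ σ : Equiv.Perm (Fin n), ((Equiv.Perm.sign σ : ℤ) : ℝ) * Q σ 0) = 0 :=
      hG0 0 h0s
    rw [Fintype.sum_eq_single 1 (fun σ hσ => by rw [hQ0ne σ hσ, mul_zero])] at h
    rw [hQ10] at h
    simp only [Equiv.Perm.sign_one] at h
    have h2 : P * deriv (b i0 i0) 0 = 0 := by
      simpa using h
    exact (mul_eq_zero.1 h2).resolve_left hPne
  have hbeq00 : b i0 i0 = fun t => A t i0 i0 - Λ t := by
    funext t
    simp [hbdef]
  have hder00 : deriv (b i0 i0) 0 = deriv (fun t => A t i0 i0) 0 - deriv Λ 0 := by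
    rw [hbeq00]
    exact deriv_sub (hAdiff i0 i0 0 h0s) (hΛdiff 0 h0s)
  have part1 : deriv Λ 0 = deriv (fun t => A t i0 i0) 0 := by
    rw [hc00] at hder00
    linarith
  -- PART 2
  have hbsymm : ∀ i j : Fin n, ∀ t ∈ s, b i j t = b j i t := by
    intro i j t ht
    by_cases h : i = j
    · subst h; rfl
    · simp only [hbdef, if_neg h, if_neg (Ne.symm h), sub_zero]
      exact (hsymm t ht).apply j i
  have hcsymm : ∀ k : Fin n, deriv (b k i0) 0 = deriv (b i0 k) 0 := by
    intro k
    apply Filter.EventuallyEq.deriv_eq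
    filter_upwards [hsnhds] with t ht using hbsymm k i0 t ht
  set S : Finset (Equiv.Perm (Fin n)) :=
    insert 1 ((Finset.univ.erase i0).image fun k => Equiv.swap i0 k) with hSdef
  have hQ'zero : ∀ σ : Equiv.Perm (Fin n), σ ∉ S → Q' σ = 0 := by
    intro σ hσS
    have hσ1 : σ ≠ 1 := fun h => hσS (by rw [h, hSdef]; exact Finset.mem_insert_self _ _)
    have hσ2 : ∀ k : Fin n, k ≠ i0 → σ ≠ Equiv.swap i0 k := by
      intro k hk h
      exact hσS (by
        rw [hSdef]
        exact Finset.mem_insert_of_mem (Finset.mem_image.2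
          ⟨k, Finset.mem_erase.2 ⟨hk, Finset.mem_univ k⟩, h.symm⟩))
    simp only [hQ'def]
    refine Finset.sum_eq_zero fun i _ => ?_
    have hT2 : (∏ j ∈ Finset.univ.erase i, b (σ j) j 0) = 0 := by
      obtain ⟨k, hki, hk⟩ : ∃ k, k ≠ i ∧ σ k ≠ k := by
        by_contra h
        push_neg at h
        exact hσ1 (perm_eq_one_of_fix σ i h)
      exact hpz σ _ k (Finset.mem_erase.2 ⟨hki, Finset.mem_univ k⟩) (Or.inl hk)
    have hT1 : ∀ j ∈ Finset.univ.erase i,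
        (∏ m ∈ (Finset.univ.erase i).erase j, b (σ m) m 0) * deriv (b (σ j) j) 0 = 0 := by
      intro j hj
      have hji : j ≠ i := (Finset.mem_erase.1 hj).1
      by_cases hex : ∃ m ∈ (Finset.univ.erase i).erase j, σ m ≠ m ∨ m = i0
      · obtain ⟨m, hm, hcase⟩ := hex
        rw [hpz σ _ m hm hcase, zero_mul]
      · exfalso
        push_neg at hex
        have hmem : ∀ m : Fin n, m ≠ j → m ≠ i → m ∈ (Finset.univ.erase i).erase j :=
          fun m h1 h2 => Finset.mem_erase.2 ⟨h1, Finset.mem_erase.2 ⟨h2, Finset.mem_univ m⟩⟩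
        have hfix : ∀ m : Fin n, m ≠ i → m ≠ j → σ m = m :=
          fun m h2 h1 => (hex m (hmem m h1 h2)).1
        rcases perm_eq_swap_of_fix σ i j (Ne.symm hji) hfix with h1 | h2
        · exact hσ1 h1
        · have hi0 : i0 = i ∨ i0 = j := by
            by_contra hc
            push_neg at hc
            exact (hex i0 (hmem i0 (fun h => hc.2 h) (fun h => hc.1 h))).2 rfl
          rcases hi0 with h | h
          · rw [← h] at h2
            exact hσ2 j (fun hj0 => hji (hj0.trans h)) h2
          · have h3 : σ = Equiv.swap i0 i := by rw [h2, Equiv.swap_comm, ← h]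
            exact hσ2 i (fun hh => hji ((hh.trans h).symm)) h3
    rw [Finset.sum_eq_zero hT1, hT2, zero_mul, zero_mul, add_zero]
  have hsum2 : (∑ σ ∈ S, ((Equiv.Perm.sign σ : ℤ) : ℝ) * Q' σ) = 0 := by
    rw [← Finset.sum_subset (Finset.subset_univ S)
      (fun σ _ hσ => by rw [hQ'zero σ hσ, mul_zero])] at hG'0
    exact hG'0
  have h1S : (1 : Equiv.Perm (Fin n)) ∉ (Finset.univ.erase i0).image fun k => Equiv.swap i0 k := by
    intro h
    obtain ⟨k, hk, hkeq⟩ := Finset.mem_image.1 h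
    exact (Finset.mem_erase.1 hk).1 (Equiv.swap_eq_one_iff.1 hkeq).symm
  have hinj : ∀ x ∈ Finset.univ.erase i0, ∀ y ∈ Finset.univ.erase i0,
      Equiv.swap i0 x = Equiv.swap i0 y → x = y := by
    intro x _ y _ hxy
    have := congrArg (fun e : Equiv.Perm (Fin n) => e i0) hxy
    simpa [Equiv.swap_apply_left] using this
  have hexp : Q' 1 = ∑ k ∈ Finset.univ.erase i0, Q' (Equiv.swap i0 k) := by
    rw [hSdef, Finset.sum_insert h1S, Finset.sum_image hinj] at hsum2
    have hterm : ∀ k ∈ Finset.univ.erase i0,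
        ((Equiv.Perm.sign (Equiv.swap i0 k) : ℤ) : ℝ) * Q' (Equiv.swap i0 k)
          = -Q' (Equiv.swap i0 k) := by
      intro k hk
      rw [Equiv.Perm.sign_swap (Ne.symm (Finset.mem_erase.1 hk).1)]
      norm_num
    rw [Finset.sum_congr rfl hterm, Finset.sum_neg_distrib] at hsum2
    simp only [Equiv.Perm.sign_one, Units.val_one, Int.cast_one, one_mul] at hsum2
    linarith
  -- value of Q' at the identity
  have hQ'1 : Q' 1 = P * deriv (deriv (b i0 i0)) 0 := by
    simp only [hQ'def, Equiv.Perm.one_apply]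
    rw [Fintype.sum_eq_single i0 ?_]
    · rw [hc00, mul_zero, zero_add, hbdiagprod]
    · intro i hi
      have hz : ∀ j ∈ Finset.univ.erase i,
          (∏ m ∈ (Finset.univ.erase i).erase j, b m m 0) * deriv (b j j) 0 = 0 := by
        intro j hj
        by_cases hji0 : j = i0
        · subst hji0; rw [hc00, mul_zero]
        · rw [hpz1 _ (Finset.mem_erase.2 ⟨Ne.symm hji0,
            Finset.mem_erase.2 ⟨Ne.symm hi, Finset.mem_univ i0⟩⟩), zero_mul]
      rw [Finset.sum_eq_zero hz, zero_mul, zero_add,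
        hpz1 _ (Finset.mem_erase.2 ⟨Ne.symm hi, Finset.mem_univ i0⟩), zero_mul]
  -- value of Q' at the transpositions
  have hQ'swap : ∀ k : Fin n, k ≠ i0 → Q' (Equiv.swap i0 k) =
      2 * ((∏ m ∈ (Finset.univ.erase i0).erase k, (lam m - lam i0))
        * (deriv (b i0 k) 0 * deriv (b k i0) 0)) := by
    intro k hk0
    have hσ0 : Equiv.swap i0 k i0 = k := Equiv.swap_apply_left _ _
    have hσk : Equiv.swap i0 k k = i0 := Equiv.swap_apply_right _ _
    have hσm : ∀ m : Fin n, m ≠ i0 → m ≠ k → Equiv.swap i0 k m = m := fun m h1 h2 =>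
      Equiv.swap_apply_of_ne_of_ne h1 h2
    have hprz : ∀ (u : Finset (Fin n)), (∃ m ∈ u, m = i0 ∨ m = k) →
        (∏ j ∈ u, b (Equiv.swap i0 k j) j 0) = 0 := by
      rintro u ⟨m, hm, hcase⟩
      rcases hcase with h | h
      · exact hpz _ u m hm (Or.inl (by rw [h, hσ0]; exact hk0))
      · exact hpz _ u m hm (Or.inl (by rw [h, hσk]; exact Ne.symm hk0))
    simp only [hQ'def]
    rw [Finset.sum_eq_add_of_mem i0 k (Finset.mem_univ _) (Finset.mem_univ _)
      (Ne.symm hk0) ?houter]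
    case houter =>
      intro i _ hi
      have h2 : (∏ j ∈ Finset.univ.erase i, b (Equiv.swap i0 k j) j 0) = 0 :=
        hprz _ ⟨i0, Finset.mem_erase.2 ⟨Ne.symm hi.1, Finset.mem_univ _⟩, Or.inl rfl⟩
      have h1 : ∀ j ∈ Finset.univ.erase i,
          (∏ m ∈ (Finset.univ.erase i).erase j, b (Equiv.swap i0 k m) m 0)
            * deriv (b (Equiv.swap i0 k j) j) 0 = 0 := by
        intro j hj
        by_cases hji0 : j = i0
        · subst hji0
          rw [hprz _ ⟨k, Finset.mem_erase.2 ⟨hk0,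
            Finset.mem_erase.2 ⟨Ne.symm hi.2, Finset.mem_univ k⟩⟩, Or.inr rfl⟩, zero_mul]
        · rw [hprz _ ⟨i0, Finset.mem_erase.2 ⟨Ne.symm hji0,
            Finset.mem_erase.2 ⟨Ne.symm hi.1, Finset.mem_univ i0⟩⟩, Or.inl rfl⟩, zero_mul]
      rw [Finset.sum_eq_zero h1, h2, zero_mul, zero_mul, add_zero]
    -- the i0 term
    have hkmem : k ∈ Finset.univ.erase i0 := Finset.mem_erase.2 ⟨hk0, Finset.mem_univ k⟩
    have hi0memk : i0 ∈ Finset.univ.erase k :=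
      Finset.mem_erase.2 ⟨Ne.symm hk0, Finset.mem_univ i0⟩
    rw [Finset.sum_eq_single_of_mem k hkmem ?hz1]
    case hz1 =>
      intro j hj hjk
      rw [hprz _ ⟨k, Finset.mem_erase.2 ⟨Ne.symm hjk, hkmem⟩, Or.inr rfl⟩, zero_mul]
    rw [Finset.sum_eq_single_of_mem i0 hi0memk ?hz2]
    case hz2 =>
      intro j hj hji0
      rw [hprz _ ⟨i0, Finset.mem_erase.2 ⟨Ne.symm hji0, hi0memk⟩, Or.inl rfl⟩, zero_mul]
    rw [hprz _ ⟨k, hkmem, Or.inr rfl⟩, hprz _ ⟨i0, hi0memk, Or.inl rfl⟩]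
    rw [hσ0, hσk]
    have hprodval1 : (∏ m ∈ (Finset.univ.erase i0).erase k, b (Equiv.swap i0 k m) m 0)
        = ∏ m ∈ (Finset.univ.erase i0).erase k, (lam m - lam i0) := by
      refine Finset.prod_congr rfl fun m hm => ?_
      obtain ⟨hmk, hmi0, -⟩ : m ≠ k ∧ m ≠ i0 ∧ m ∈ Finset.univ := by
        have h1 := Finset.mem_erase.1 hm
        have h2 := Finset.mem_erase.1 h1.2
        exact ⟨h1.1, h2.1, h2.2⟩
      rw [hσm m hmi0 hmk, hb0, if_pos rfl]
    have hprodval2 : (∏ m ∈ (Finset.univ.erase k).erase i0, b (Equiv.swap i0 k m) m 0)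
        = ∏ m ∈ (Finset.univ.erase i0).erase k, (lam m - lam i0) := by
      rw [Finset.erase_right_comm]
      exact hprodval1
    rw [hprodval1, hprodval2]
    ring
  -- combine
  have hmain : P * deriv (deriv (b i0 i0)) 0
      = ∑ k ∈ Finset.univ.erase i0,
          2 * ((∏ m ∈ (Finset.univ.erase i0).erase k, (lam m - lam i0))
            * (deriv (b i0 k) 0 * deriv (b k i0) 0)) := by
    rw [← hQ'1, hexp]
    exact Finset.sum_congr rfl fun k hk => hQ'swap k (Finset.mem_erase.1 hk).1
  have hterm2 : ∀ k ∈ Finset.univ.erase i0,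
      2 * ((∏ m ∈ (Finset.univ.erase i0).erase k, (lam m - lam i0))
        * (deriv (b i0 k) 0 * deriv (b k i0) 0))
      = P * (2 * ((deriv (b i0 k) 0)^2 / (lam k - lam i0))) := by
    intro k hk
    have hμ : lam k - lam i0 ≠ 0 := sub_ne_zero_of_ne (hsimple' k (Finset.mem_erase.1 hk).1)
    have hPfact : (lam k - lam i0)
        * (∏ m ∈ (Finset.univ.erase i0).erase k, (lam m - lam i0)) = P := by
      rw [hPdef]
      exact Finset.mul_prod_erase _ (fun m => lam m - lam i0) hk
    rw [hcsymm k, ← hPfact]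
    field_simp
  have hd2 : deriv (deriv (b i0 i0)) 0
      = 2 * ∑ k ∈ Finset.univ.erase i0, (deriv (b i0 k) 0)^2 / (lam k - lam i0) := by
    apply mul_left_cancel₀ hPne
    rw [hmain, Finset.sum_congr rfl hterm2, ← Finset.mul_sum, ← Finset.mul_sum]
  have hdd : deriv (deriv (b i0 i0)) 0
      = deriv (deriv (fun t => A t i0 i0)) 0 - deriv (deriv Λ) 0 := by
    have hev : deriv (b i0 i0) =ᶠ[nhds 0]
        fun t => deriv (fun u => A u i0 i0) t - deriv Λ t := by
      filter_upwards [hsnhds] with t ht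
      rw [hbeq00]
      exact deriv_sub (hAdiff i0 i0 t ht) (hΛdiff t ht)
    rw [hev.deriv_eq]
    exact deriv_sub (hAd2 i0 i0) hΛd2
  have hcoff : ∀ k : Fin n, k ≠ i0 → deriv (b i0 k) 0 = deriv (fun t => A t i0 k) 0 := by
    intro k hk
    congr 1
    funext t
    simp only [hbdef, if_neg (fun h : i0 = k => hk h.symm), sub_zero]
  have part2 : iteratedDeriv 2 Λ 0 = iteratedDeriv 2 (fun t => A t i0 i0) 0
      + 2 * ∑ k ∈ Finset.univ.erase i0,
          (deriv (fun t => A t i0 k) 0)^2 / (lam i0 - lam k) := by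
    have h2Λ : iteratedDeriv 2 Λ 0 = deriv (deriv Λ) 0 := by
      rw [iteratedDeriv_succ, iteratedDeriv_one]
    have h2A : iteratedDeriv 2 (fun t => A t i0 i0) 0
        = deriv (deriv (fun t => A t i0 i0)) 0 := by
      rw [iteratedDeriv_succ, iteratedDeriv_one]
    rw [h2Λ, h2A]
    have hswapsign : ∑ k ∈ Finset.univ.erase i0,
        (deriv (fun t => A t i0 k) 0)^2 / (lam i0 - lam k)
        = - ∑ k ∈ Finset.univ.erase i0, (deriv (b i0 k) 0)^2 / (lam k - lam i0) := by
      rw [← Finset.sum_neg_distrib]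
      refine Finset.sum_congr rfl fun k hk => ?_
      rw [hcoff k (Finset.mem_erase.1 hk).1, ← neg_sub (lam k) (lam i0), div_neg]
    rw [hswapsign]
    linarith
  exact ⟨part1, part2⟩
end
end

section
/- Let u be a C³ solution of ∑_{i=1}^n arctan λᵢ(x) = ψ(x) on an open set Ω ⊂ ℝⁿ with ψ of class C¹. Let X(x) = (x, Du(x)) ∈ ℝⁿ×ℝⁿ and let J : ℝⁿ×ℝⁿ → ℝⁿ×ℝⁿ be the rotation J(a,b) = (−b,a). Then, applying the operator Δ_g componentwise to X, one has Δ_g X = J( ∑_{l,m} g^{lm} (∂_lψ) ∂_m X ) on Ω; that is, the mean curvature vector of the Lagrangian graph (x, Du(x)) equals J ∇_g ψ. -/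
open Real Metric Finset MeasureTheory Matrix

noncomputable section

namespace MCFAux

lemma tail3 {α : Type*} (a b c : α) : Fin.tail ![a, b, c] = ![b, c] := by
  funext i; fin_cases i <;> rfl

lemma init3 {α : Type*} (a b c : α) : Fin.init ![a, b, c] = ![a, b] := by
  funext i; fin_cases i <;> rfl

lemma last3 {α : Type*} (a b c : α) : (![a, b, c]) (Fin.last 2) = c := rfl

variable {n : ℕ} {Ω : Set (ES n)} {u : ES n → ℝ}

lemma hess_symm (hΩ : IsOpen Ω) (hu : ContDiffOn ℝ 3 u Ω) {x : ES n} (hx : x ∈ Ω)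
    (i j : Fin n) : Hess n u x i j = Hess n u x j i := by
  have hca : ContDiffAt ℝ 3 u x := hu.contDiffAt (hΩ.mem_nhds hx)
  have hsymm := hca.isSymmSndFDerivAt (by norm_num)
  simp only [Hess, iteratedFDeriv_two_apply]
  simpa using hsymm (evec n i) (evec n j)

/-- Derivative of a Hessian entry, with value the third derivative. -/
lemma hessEntry_hasFDerivAt (hΩ : IsOpen Ω) (hu : ContDiffOn ℝ 3 u Ω) {x : ES n} (hx : x ∈ Ω)
    (p q : Fin n) :
    ∃ L : ES n →L[ℝ] ℝ, HasFDerivAt (fun y => Hess n u y p q) L x ∧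
      ∀ k, L (evec n k) = pd3 n u x k p q := by
  have hca : ContDiffAt ℝ 3 u x := hu.contDiffAt (hΩ.mem_nhds hx)
  have hdiff : DifferentiableAt ℝ (iteratedFDeriv ℝ 2 u) x := by
    have h2 : ContDiffAt ℝ 1 (iteratedFDeriv ℝ 2 u) x :=
      hca.iteratedFDeriv_right (by norm_num)
    exact h2.differentiableAt (by norm_num)
  refine ⟨(fderiv ℝ (iteratedFDeriv ℝ 2 u) x).flipMultilinear ![evec n p, evec n q],
    hdiff.hasFDerivAt.continuousMultilinear_apply_const _, fun k => ?_⟩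
  rw [ContinuousLinearMap.flipMultilinear_apply_apply, pd3,
    iteratedFDeriv_succ_apply_left, tail3]
  rfl


lemma pd3_swap23 (hΩ : IsOpen Ω) (hu : ContDiffOn ℝ 3 u Ω) {x : ES n} (hx : x ∈ Ω)
    (a b c : Fin n) : pd3 n u x a b c = pd3 n u x a c b := by
  obtain ⟨L1, hL1, hv1⟩ := hessEntry_hasFDerivAt hΩ hu hx b c
  obtain ⟨L2, hL2, hv2⟩ := hessEntry_hasFDerivAt hΩ hu hx c b
  have hfe : fderiv ℝ (fun y => Hess n u y b c) x = fderiv ℝ (fun y => Hess n u y c b) x := by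
    apply Filter.EventuallyEq.fderiv_eq
    filter_upwards [hΩ.mem_nhds hx] with y hy
    exact hess_symm hΩ hu hy b c
  have h1 : L1 = L2 := by rw [← hL1.fderiv, ← hL2.fderiv, hfe]
  rw [← hv1 a, ← hv2 a, h1]

lemma pd3_swap12 (hΩ : IsOpen Ω) (hu : ContDiffOn ℝ 3 u Ω) {x : ES n} (hx : x ∈ Ω)
    (a b c : Fin n) : pd3 n u x a b c = pd3 n u x b a c := by
  have hca : ContDiffAt ℝ 3 u x := hu.contDiffAt (hΩ.mem_nhds hx)
  have h2 : ContDiffAt ℝ 2 (fderiv ℝ u) x := hca.fderiv_right (by norm_num)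
  have hsym := h2.isSymmSndFDerivAt (by norm_num)
  have e1 : ∀ a b c : Fin n, pd3 n u x a b c =
      fderiv ℝ (fderiv ℝ (fderiv ℝ u)) x (evec n a) (evec n b) (evec n c) := by
    intro a b c
    rw [pd3, iteratedFDeriv_succ_apply_right, init3, last3, iteratedFDeriv_two_apply]
    rfl
  rw [e1, e1, hsym (evec n a) (evec n b)]

lemma pd3_swap13 (hΩ : IsOpen Ω) (hu : ContDiffOn ℝ 3 u Ω) {x : ES n} (hx : x ∈ Ω)
    (a b c : Fin n) : pd3 n u x a b c = pd3 n u x c b a := by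
  rw [pd3_swap12 hΩ hu hx, pd3_swap23 hΩ hu hx, pd3_swap12 hΩ hu hx]

lemma hessT (hΩ : IsOpen Ω) (hu : ContDiffOn ℝ 3 u Ω) {x : ES n} (hx : x ∈ Ω) :
    (Hess n u x)ᵀ = Hess n u x := by
  ext i j; exact hess_symm hΩ hu hx j i

lemma detg_pos {lamF : ES n → Fin n → ℝ} (heig : HessEig n u lamF Ω) {x : ES n} (hx : x ∈ Ω) :
    0 < (1 + Hess n u x * Hess n u x).det := by
  obtain ⟨P, hP, hH⟩ := heig x hx
  have hPt : Pᵀ * P = 1 := mul_eq_one_comm.mp hP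
  have key : 1 + Hess n u x * Hess n u x =
      P * Matrix.diagonal (fun i => 1 + lamF x i ^ 2) * Pᵀ := by
    have h2 : Hess n u x * Hess n u x =
        P * (Matrix.diagonal (lamF x) * Matrix.diagonal (lamF x)) * Pᵀ := by
      rw [hH]
      calc P * Matrix.diagonal (lamF x) * Pᵀ * (P * Matrix.diagonal (lamF x) * Pᵀ)
          = P * Matrix.diagonal (lamF x) * (Pᵀ * P) * Matrix.diagonal (lamF x) * Pᵀ := by
            simp only [Matrix.mul_assoc]
        _ = P * (Matrix.diagonal (lamF x) * Matrix.diagonal (lamF x)) * Pᵀ := by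
            rw [hPt]; simp only [Matrix.mul_one, Matrix.mul_assoc]
    rw [h2, Matrix.diagonal_mul_diagonal]
    have h1 : (1 : Matrix (Fin n) (Fin n) ℝ) = P * Matrix.diagonal (fun _ => 1) * Pᵀ := by
      simp [hP]
    calc (1 : Matrix (Fin n) (Fin n) ℝ) + P * Matrix.diagonal (fun i => lamF x i * lamF x i) * Pᵀ
        = P * Matrix.diagonal (fun _ => 1) * Pᵀ + P * Matrix.diagonal (fun i => lamF x i * lamF x i) * Pᵀ := by
          rw [← h1]
      _ = P * (Matrix.diagonal (fun _ => 1) + Matrix.diagonal (fun i => lamF x i * lamF x i)) * Pᵀ := by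
          rw [Matrix.mul_add, Matrix.add_mul]
      _ = P * Matrix.diagonal (fun i => 1 + lamF x i ^ 2) * Pᵀ := by
          rw [Matrix.diagonal_add]; congr 2; funext i; ring
  rw [key, Matrix.det_mul, Matrix.det_mul, Matrix.det_transpose]
  have hdp : P.det * P.det = 1 := by
    have := congrArg Matrix.det hP
    rwa [Matrix.det_mul, Matrix.det_transpose, Matrix.det_one] at this
  have : P.det * Matrix.det (Matrix.diagonal fun i => 1 + lamF x i ^ 2) * P.det
      = Matrix.det (Matrix.diagonal fun i => 1 + lamF x i ^ 2) := by
    rw [mul_comm, ← mul_assoc, hdp, one_mul]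
  rw [this, Matrix.det_diagonal]
  exact Finset.prod_pos fun i _ => by positivity

lemma ginv_mul_g {lamF : ES n → Fin n → ℝ} (heig : HessEig n u lamF Ω) {x : ES n} (hx : x ∈ Ω) :
    ginv n u x * (1 + Hess n u x * Hess n u x) = 1 :=
  Matrix.nonsing_inv_mul _ (isUnit_iff_ne_zero.mpr (detg_pos heig hx).ne')

lemma g_mul_ginv {lamF : ES n → Fin n → ℝ} (heig : HessEig n u lamF Ω) {x : ES n} (hx : x ∈ Ω) :
    (1 + Hess n u x * Hess n u x) * ginv n u x = 1 :=
  Matrix.mul_nonsing_inv _ (isUnit_iff_ne_zero.mpr (detg_pos heig hx).ne')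

lemma ginvT (hΩ : IsOpen Ω) (hu : ContDiffOn ℝ 3 u Ω) {x : ES n} (hx : x ∈ Ω) :
    (ginv n u x)ᵀ = ginv n u x := by
  rw [ginv, Matrix.transpose_nonsing_inv]
  congr 1
  rw [Matrix.transpose_add, Matrix.transpose_one, Matrix.transpose_mul, hessT hΩ hu hx]

lemma ginv_comm {lamF : ES n → Fin n → ℝ} (heig : HessEig n u lamF Ω) {x : ES n} (hx : x ∈ Ω) :
    ginv n u x * Hess n u x = Hess n u x * ginv n u x := by
  set H := Hess n u x
  set G := ginv n u x
  set g := 1 + H * H with hg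
  have hcomm : H * g = g * H := by rw [hg]; noncomm_ring
  have h1 : G * g = 1 := ginv_mul_g heig hx
  have h2 : g * G = 1 := g_mul_ginv heig hx
  calc G * H = G * H * (g * G) := by rw [h2, Matrix.mul_one]
    _ = G * (H * g) * G := by simp only [Matrix.mul_assoc]
    _ = G * (g * H) * G := by rw [hcomm]
    _ = (G * g) * (H * G) := by simp only [Matrix.mul_assoc]
    _ = H * G := by rw [h1, Matrix.one_mul]

lemma pd1_psi {ψ : ES n → ℝ} {lamF : ES n → Fin n → ℝ}
    (hΩ : IsOpen Ω) (hu : ContDiffOn ℝ 3 u Ω) (hψ : ContDiffOn ℝ 1 ψ Ω)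
    (heig : HessEig n u lamF Ω)
    (heq : ∀ x ∈ Ω, ∑ i, Real.arctan (lamF x i) = ψ x)
    {x : ES n} (hx : x ∈ Ω) (k : Fin n) :
    pd1 n ψ x k = ∑ i, ∑ p, ginv n u x i p * pd3 n u x k p i := by
  classical
  set Mc : ES n → Matrix (Fin n) (Fin n) ℂ := fun y =>
    (1 : Matrix (Fin n) (Fin n) ℂ) + Complex.I • (Hess n u y).map (⇑Complex.ofRealHom) with hMc
  set rr : ES n → ℝ := fun y => ∏ i, Real.sqrt (1 + lamF y i ^ 2) with hrr
  -- per-factor formula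
  have hfac : ∀ t : ℝ, (1 : ℂ) + Complex.I * (t : ℂ) =
      ((Real.sqrt (1 + t ^ 2) : ℝ) : ℂ) * Complex.exp (Complex.I * ((Real.arctan t : ℝ) : ℂ)) := by
    intro t
    have hs : (0:ℝ) < Real.sqrt (1 + t ^ 2) := Real.sqrt_pos.mpr (by positivity)
    have hs' : ((Real.sqrt (1 + t ^ 2) : ℝ) : ℂ) ≠ 0 := by
      exact_mod_cast hs.ne'
    have hexp : Complex.exp (Complex.I * ((Real.arctan t : ℝ) : ℂ))
        = ((Real.cos (Real.arctan t) : ℝ) : ℂ) + ((Real.sin (Real.arctan t) : ℝ) : ℂ) * Complex.I := by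
      rw [mul_comm, Complex.exp_mul_I, Complex.ofReal_cos, Complex.ofReal_sin]
    rw [hexp, Real.cos_arctan, Real.sin_arctan]
    push_cast
    field_simp
  -- Step 1: determinant formula on Ω
  have hdet_eq : ∀ y ∈ Ω, (Mc y).det = ((rr y : ℝ) : ℂ) * Complex.exp (Complex.I * ((ψ y : ℝ) : ℂ)) := by
    intro y hy
    obtain ⟨P, hP, hH⟩ := heig y hy
    set Pc : Matrix (Fin n) (Fin n) ℂ := P.map (⇑Complex.ofRealHom) with hPc
    have hone : Pc * Pcᵀ = 1 := by
      rw [hPc, ← Matrix.transpose_map, ← Matrix.map_mul, hP,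
        Matrix.map_one _ (map_zero _) (map_one _)]
    have hmap : (Hess n u y).map (⇑Complex.ofRealHom) =
        Pc * Matrix.diagonal (fun i => ((lamF y i : ℝ) : ℂ)) * Pcᵀ := by
      rw [hH, Matrix.map_mul, Matrix.map_mul, Matrix.transpose_map,
        Matrix.diagonal_map (map_zero _)]
      rfl
    have hdiag : Matrix.diagonal (fun i => 1 + Complex.I * ((lamF y i : ℝ) : ℂ))
        = 1 + Complex.I • Matrix.diagonal (fun i => ((lamF y i : ℝ) : ℂ)) := by
      ext i j
      by_cases h : i = j
      · subst h
        simp [Matrix.one_apply_eq, Matrix.diagonal_apply_eq]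
      · simp [Matrix.one_apply_ne h, Matrix.diagonal_apply_ne _ h]
    have hfact : Mc y = Pc * Matrix.diagonal (fun i => 1 + Complex.I * ((lamF y i : ℝ) : ℂ)) * Pcᵀ := by
      calc Mc y = 1 + Complex.I • ((Hess n u y).map (⇑Complex.ofRealHom)) := rfl
        _ = Pc * Pcᵀ + Complex.I • (Pc * Matrix.diagonal (fun i => ((lamF y i : ℝ) : ℂ)) * Pcᵀ) := by
            rw [hmap, hone]
        _ = Pc * Matrix.diagonal (fun i => 1 + Complex.I * ((lamF y i : ℝ) : ℂ)) * Pcᵀ := by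
            rw [hdiag, Matrix.mul_add, Matrix.mul_one, Matrix.add_mul, Matrix.mul_smul,
              Matrix.smul_mul]
    have hPP : Pc.det * Pc.det = 1 := by
      have := congrArg Matrix.det hone
      rwa [Matrix.det_mul, Matrix.det_transpose, Matrix.det_one] at this
    rw [hfact, Matrix.det_mul, Matrix.det_mul, Matrix.det_transpose]
    have hre : Pc.det * (Matrix.diagonal (fun i => 1 + Complex.I * ((lamF y i : ℝ) : ℂ))).det * Pc.det
        = (Matrix.diagonal (fun i => 1 + Complex.I * ((lamF y i : ℝ) : ℂ))).det := by
      have : Pc.det * (Matrix.diagonal (fun i => 1 + Complex.I * ((lamF y i : ℝ) : ℂ))).det * Pc.det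
          = (Pc.det * Pc.det) * (Matrix.diagonal (fun i => 1 + Complex.I * ((lamF y i : ℝ) : ℂ))).det := by
        ring
      rw [this, hPP, one_mul]
    rw [hre, Matrix.det_diagonal]
    calc (∏ i, (1 + Complex.I * ((lamF y i : ℝ) : ℂ)))
        = ∏ i, (((Real.sqrt (1 + lamF y i ^ 2) : ℝ) : ℂ) *
            Complex.exp (Complex.I * ((Real.arctan (lamF y i) : ℝ) : ℂ))) :=
          Finset.prod_congr rfl fun i _ => hfac _
      _ = (∏ i, ((Real.sqrt (1 + lamF y i ^ 2) : ℝ) : ℂ)) *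
            ∏ i, Complex.exp (Complex.I * ((Real.arctan (lamF y i) : ℝ) : ℂ)) :=
          Finset.prod_mul_distrib
      _ = ((rr y : ℝ) : ℂ) * Complex.exp (Complex.I * ((ψ y : ℝ) : ℂ)) := by
          rw [← Complex.exp_sum, ← Finset.mul_sum]
          congr 1
          · rw [hrr]
            push_cast
            rfl
          · congr 2
            rw [← heq y hy]
            push_cast
            rfl
  -- Step 2: derivatives of the entries of Mc
  have hLall := fun p q => hessEntry_hasFDerivAt hΩ hu hx p q
  choose L hLd hLv using hLall
  set B : Matrix (Fin n) (Fin n) ℂ := fun p q => Complex.I * ((pd3 n u x k p q : ℝ) : ℂ) with hB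
  set Ept : Fin n → Fin n → (ES n →L[ℝ] ℂ) := fun p q =>
    Complex.I • (Complex.ofRealCLM.comp (L p q)) with hEpt
  have hMder : ∀ p q, HasFDerivAt (fun y => Mc y p q) (Ept p q) x := by
    intro p q
    have h0 : (fun y => Mc y p q) = fun y =>
        (1 : Matrix (Fin n) (Fin n) ℂ) p q + Complex.I * ((Hess n u y p q : ℝ) : ℂ) := by
      funext y
      simp [hMc, Matrix.add_apply, Matrix.smul_apply, Matrix.map_apply, smul_eq_mul]
    rw [h0]
    have h1 : HasFDerivAt (fun y => ((Hess n u y p q : ℝ) : ℂ))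
        (Complex.ofRealCLM.comp (L p q)) x := Complex.ofRealCLM.hasFDerivAt.comp x (hLd p q)
    exact (h1.const_mul Complex.I).const_add _
  have hEv : ∀ p q, Ept p q (evec n k) = B p q := by
    intro p q
    simp [hEpt, hB, hLv p q k]
  -- Step 3: derivative of the determinant
  set Dh : ES n →L[ℝ] ℂ := ∑ σ : Equiv.Perm (Fin n), (((Equiv.Perm.sign σ : ℤ) : ℂ)) •
      ∑ i, (∏ j ∈ Finset.univ.erase i, Mc x (σ j) j) • Ept (σ i) i with hDh
  have hdetd : HasFDerivAt (fun y => (Mc y).det) Dh x := by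
    have h0 : (fun y => (Mc y).det) = fun y => ∑ σ : Equiv.Perm (Fin n),
        (((Equiv.Perm.sign σ : ℤ) : ℂ)) * ∏ i, Mc y (σ i) i := by
      funext y
      rw [Matrix.det_apply']
    rw [h0, hDh]
    apply HasFDerivAt.fun_sum
    intro σ _
    exact (HasFDerivAt.finset_prod (fun i _ => hMder (σ i) i)).const_mul _
  -- Step 4: value of Dh at evec k as a sum of updated determinants
  have hDhv : Dh (evec n k) = ∑ i, ((Mc x).updateCol i (fun p => B p i)).det := by
    rw [hDh, ContinuousLinearMap.sum_apply]
    have hL2 : ∀ σ : Equiv.Perm (Fin n), ((((Equiv.Perm.sign σ : ℤ) : ℂ)) •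
        ∑ i, (∏ j ∈ Finset.univ.erase i, Mc x (σ j) j) • Ept (σ i) i) (evec n k)
        = (((Equiv.Perm.sign σ : ℤ) : ℂ)) *
            ∑ i, (∏ j ∈ Finset.univ.erase i, Mc x (σ j) j) * B (σ i) i := by
      intro σ
      rw [ContinuousLinearMap.smul_apply, ContinuousLinearMap.sum_apply, smul_eq_mul]
      congr 1
      refine Finset.sum_congr rfl fun i _ => ?_
      rw [ContinuousLinearMap.smul_apply, hEv, smul_eq_mul]
    rw [Finset.sum_congr rfl (fun σ _ => hL2 σ)]
    have hR : ∀ i, ((Mc x).updateCol i (fun p => B p i)).det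
        = ∑ σ : Equiv.Perm (Fin n), (((Equiv.Perm.sign σ : ℤ) : ℂ)) *
            (B (σ i) i * ∏ j ∈ Finset.univ.erase i, Mc x (σ j) j) := by
      intro i
      rw [Matrix.det_apply']
      refine Finset.sum_congr rfl fun σ _ => ?_
      congr 1
      rw [← Finset.mul_prod_erase Finset.univ _ (Finset.mem_univ i)]
      congr 1
      · simp [Matrix.updateCol_apply]
      · refine Finset.prod_congr rfl fun j hj => ?_
        rw [Matrix.updateCol_apply, if_neg (Finset.ne_of_mem_erase hj)]
    rw [Finset.sum_congr rfl (fun i _ => hR i), Finset.sum_comm]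
    refine Finset.sum_congr rfl fun σ _ => ?_
    rw [Finset.mul_sum]
    exact Finset.sum_congr rfl fun i _ => by ring
  -- Step 5: the explicit inverse of Mc x
  set Hcx : Matrix (Fin n) (Fin n) ℂ := (Hess n u x).map (⇑Complex.ofRealHom) with hHcx
  set Gc : Matrix (Fin n) (Fin n) ℂ := (ginv n u x).map (⇑Complex.ofRealHom) with hGc
  set Nx : Matrix (Fin n) (Fin n) ℂ := ((1 : Matrix (Fin n) (Fin n) ℂ) - Complex.I • Hcx) * Gc with hNx
  have hright : Mc x * Nx = 1 := by
    have expand : ∀ A : Matrix (Fin n) (Fin n) ℂ,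
        ((1 : Matrix (Fin n) (Fin n) ℂ) + Complex.I • A) *
          ((1 : Matrix (Fin n) (Fin n) ℂ) - Complex.I • A) = 1 + A * A := by
      intro A
      have e1 : (Complex.I • A) * (Complex.I • A) = -(A * A) := by
        rw [Matrix.smul_mul, Matrix.mul_smul, smul_smul, Complex.I_mul_I, neg_one_smul]
      calc ((1 : Matrix (Fin n) (Fin n) ℂ) + Complex.I • A) *
            ((1 : Matrix (Fin n) (Fin n) ℂ) - Complex.I • A)
          = ((1 : Matrix (Fin n) (Fin n) ℂ) + Complex.I • A) -
              ((Complex.I • A) + (Complex.I • A) * (Complex.I • A)) := by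
            rw [Matrix.mul_sub, Matrix.mul_one, Matrix.add_mul, Matrix.one_mul]
        _ = 1 + A * A := by rw [e1]; abel
    have h1 : Mc x * ((1 : Matrix (Fin n) (Fin n) ℂ) - Complex.I • Hcx) = 1 + Hcx * Hcx :=
      expand Hcx
    have hmapg : (1 : Matrix (Fin n) (Fin n) ℂ) + Hcx * Hcx
        = (1 + Hess n u x * Hess n u x).map (⇑Complex.ofRealHom) := by
      rw [Matrix.map_add _ (fun a b => map_add Complex.ofRealHom a b),
        Matrix.map_one _ (map_zero _) (map_one _), Matrix.map_mul]
    have h2 : ((1 : Matrix (Fin n) (Fin n) ℂ) + Hcx * Hcx) * Gc = 1 := by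
      rw [hmapg, hGc, ← Matrix.map_mul, g_mul_ginv heig hx,
        Matrix.map_one _ (map_zero _) (map_one _)]
    rw [hNx, ← Matrix.mul_assoc, h1, h2]
  have hdetMc : (Mc x).det ≠ 0 := by
    have h3 := congrArg Matrix.det hright
    rw [Matrix.det_mul, Matrix.det_one] at h3
    exact left_ne_zero_of_mul_eq_one h3
  have hinv : (Mc x)⁻¹ = Nx := Matrix.inv_eq_right_inv hright
  have hadj : (Mc x).adjugate = (Mc x).det • Nx := by
    have h3 : (Mc x)⁻¹ * (Mc x * (Mc x).adjugate) = (Mc x)⁻¹ * ((Mc x).det • 1) := by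
      rw [Matrix.mul_adjugate]
    rw [← Matrix.mul_assoc, Matrix.nonsing_inv_mul _ (isUnit_iff_ne_zero.mpr hdetMc),
      Matrix.one_mul, Matrix.mul_smul, Matrix.mul_one, hinv] at h3
    exact h3
  -- Step 6: updated determinants via the inverse
  have hupd : ∀ i, ((Mc x).updateCol i (fun p => B p i)).det
      = (Mc x).det * ∑ p, Nx i p * B p i := by
    intro i
    rw [← Matrix.cramer_apply, Matrix.cramer_eq_adjugate_mulVec]
    rw [hadj]
    show (((Mc x).det • Nx) *ᵥ fun p => B p i) i = _
    rw [Matrix.smul_mulVec, Pi.smul_apply, smul_eq_mul]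
    congr 1
    try simp [Matrix.mulVec, dotProduct]
  -- Step 7: the trace computation
  set t1 : ℝ := ∑ i, ∑ p, ginv n u x i p * pd3 n u x k p i with ht1
  set t2 : ℝ := ∑ i, ∑ p, (Hess n u x * ginv n u x) i p * pd3 n u x k p i with ht2
  have htrace : ∑ i, ∑ p, Nx i p * B p i = Complex.I * ((t1 : ℝ) : ℂ) + ((t2 : ℝ) : ℂ) := by
    have hNent : ∀ i p, Nx i p = ((ginv n u x i p : ℝ) : ℂ)
        - Complex.I * (((Hess n u x * ginv n u x) i p : ℝ) : ℂ) := by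
      intro i p
      rw [hNx, Matrix.sub_mul, Matrix.one_mul, Matrix.smul_mul, Matrix.sub_apply,
        Matrix.smul_apply, smul_eq_mul, hGc, hHcx, ← Matrix.map_mul]
      simp [Matrix.map_apply]
    have hptw : ∀ i p, Nx i p * B p i =
        Complex.I * ((ginv n u x i p * pd3 n u x k p i : ℝ) : ℂ)
          + (((Hess n u x * ginv n u x) i p * pd3 n u x k p i : ℝ) : ℂ) := by
      intro i p
      rw [hNent, hB]
      push_cast
      linear_combination (-(((Hess n u x * ginv n u x) i p : ℂ) * ((pd3 n u x k p i : ℝ) : ℂ))) * Complex.I_mul_I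
    rw [Finset.sum_congr rfl fun i _ => Finset.sum_congr rfl fun p _ => hptw i p]
    rw [ht1, ht2]
    push_cast
    rw [Finset.mul_sum]
    rw [← Finset.sum_add_distrib]
    refine Finset.sum_congr rfl fun i _ => ?_
    rw [Finset.mul_sum, ← Finset.sum_add_distrib]
  -- Step 8: differentiate the phase identity
  have hψd : HasFDerivAt ψ (fderiv ℝ ψ x) x :=
    ((hψ.contDiffAt (hΩ.mem_nhds hx)).differentiableAt (by norm_num)).hasFDerivAt
  set dψ := fderiv ℝ ψ x with hdψ
  set Earg : ES n → ℂ := fun y => -(Complex.I * ((ψ y : ℝ) : ℂ)) with hEarg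
  set E' : ES n →L[ℝ] ℂ := -(Complex.I • (Complex.ofRealCLM.comp dψ)) with hE'
  have hEargd : HasFDerivAt Earg E' x := by
    have h1 : HasFDerivAt (fun y => ((ψ y : ℝ) : ℂ)) (Complex.ofRealCLM.comp dψ) x :=
      Complex.ofRealCLM.hasFDerivAt.comp x hψd
    exact (h1.const_mul Complex.I).neg
  have hEd : HasFDerivAt (fun y => Complex.exp (Earg y)) (Complex.exp (Earg x) • E') x :=
    hEargd.cexp
  set W' : ES n →L[ℝ] ℂ := Complex.exp (Earg x) • Dh + (Mc x).det • (Complex.exp (Earg x) • E')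
    with hW'
  have hw : HasFDerivAt (fun y => Complex.exp (Earg y) * (Mc y).det) W' x := hEd.mul hdetd
  have hcancel : ∀ y, Complex.exp (Earg y) * Complex.exp (Complex.I * ((ψ y : ℝ) : ℂ)) = 1 := by
    intro y
    rw [hEarg, ← Complex.exp_add]
    simp
  have him0 : fderiv ℝ (fun y => (Complex.exp (Earg y) * (Mc y).det).im) x = 0 := by
    have hev : (fun y => (Complex.exp (Earg y) * (Mc y).det).im) =ᶠ[nhds x] (fun _ => 0) := by
      filter_upwards [hΩ.mem_nhds hx] with y hy
      rw [hdet_eq y hy]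
      have h5 : Complex.exp (Earg y) * (((rr y : ℝ) : ℂ) * Complex.exp (Complex.I * ((ψ y : ℝ) : ℂ)))
          = ((rr y : ℝ) : ℂ) := by
        calc Complex.exp (Earg y) * (((rr y : ℝ) : ℂ) * Complex.exp (Complex.I * ((ψ y : ℝ) : ℂ)))
            = ((rr y : ℝ) : ℂ) * (Complex.exp (Earg y) * Complex.exp (Complex.I * ((ψ y : ℝ) : ℂ))) := by
              ring
          _ = ((rr y : ℝ) : ℂ) := by rw [hcancel, mul_one]
      rw [h5, Complex.ofReal_im]
    rw [hev.fderiv_eq]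
    exact fderiv_const_apply 0
  have himd := (Complex.imCLM.hasFDerivAt (x := Complex.exp (Earg x) * (Mc x).det)).comp x hw
  have hkey : Complex.imCLM.comp W' = (0 : ES n →L[ℝ] ℝ) := by
    rw [← himd.fderiv]
    exact him0
  have hkv : (W' (evec n k)).im = 0 := by
    have := ContinuousLinearMap.ext_iff.mp hkey (evec n k)
    simpa using this
  -- Step 9: compute W' (evec n k)
  have hwx : Complex.exp (Earg x) * (Mc x).det = ((rr x : ℝ) : ℂ) := by
    rw [hdet_eq x hx]
    calc Complex.exp (Earg x) * (((rr x : ℝ) : ℂ) * Complex.exp (Complex.I * ((ψ x : ℝ) : ℂ)))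
        = ((rr x : ℝ) : ℂ) * (Complex.exp (Earg x) * Complex.exp (Complex.I * ((ψ x : ℝ) : ℂ))) := by
          ring
      _ = ((rr x : ℝ) : ℂ) := by rw [hcancel, mul_one]
  have hDv : Dh (evec n k) = (Mc x).det * (Complex.I * ((t1 : ℝ) : ℂ) + ((t2 : ℝ) : ℂ)) := by
    rw [hDhv, Finset.sum_congr rfl fun i _ => hupd i, ← Finset.mul_sum, htrace]
  have hEv' : E' (evec n k) = -(Complex.I * ((pd1 n ψ x k : ℝ) : ℂ)) := by
    rw [hE']
    simp [pd1, hdψ]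
  have hWval : W' (evec n k) = ((rr x : ℝ) : ℂ) *
      (Complex.I * ((t1 : ℝ) : ℂ) + ((t2 : ℝ) : ℂ) - Complex.I * ((pd1 n ψ x k : ℝ) : ℂ)) := by
    rw [hW']
    rw [ContinuousLinearMap.add_apply, ContinuousLinearMap.smul_apply,
      ContinuousLinearMap.smul_apply, ContinuousLinearMap.smul_apply, hDv, hEv']
    rw [smul_eq_mul, smul_eq_mul, smul_eq_mul]
    rw [← hwx]
    ring
  have hrpos : (0:ℝ) < rr x := by
    rw [hrr]
    exact Finset.prod_pos fun i _ => Real.sqrt_pos.mpr (by positivity)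
  have hfin : rr x * (t1 - pd1 n ψ x k) = 0 := by
    have h6 : (W' (evec n k)).im = rr x * (t1 - pd1 n ψ x k) := by
      rw [hWval]
      simp [Complex.mul_im, Complex.add_im, Complex.sub_im, Complex.mul_re]
      try ring
    rw [← h6, hkv]
  have h7 : t1 - pd1 n ψ x k = 0 := by
    rcases mul_eq_zero.mp hfin with h | h
    · exact absurd h hrpos.ne'
    · exact h
  rw [ht1] at h7
  linarith [h7]

lemma pd1_coord (x : ES n) (k j : Fin n) :
    pd1 n (fun y => y k) x j = if k = j then 1 else 0 := by
  have hproj : (fun y : ES n => y k) = ⇑(EuclideanSpace.proj (𝕜 := ℝ) k) := rfl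
  rw [pd1, hproj, (EuclideanSpace.proj (𝕜 := ℝ) k).fderiv]
  show (evec n j) k = _
  rw [evec, EuclideanSpace.single_apply]

lemma pd2_coord (x : ES n) (k i j : Fin n) :
    pd2 n (fun y => y k) x i j = 0 := by
  have hproj : (fun y : ES n => y k) = ⇑(EuclideanSpace.proj (𝕜 := ℝ) k) := rfl
  rw [pd2, iteratedFDeriv_two_apply]
  have hfd : (fderiv ℝ (fun y : ES n => y k)) =
      fun _ : ES n => (EuclideanSpace.proj (𝕜 := ℝ) k : ES n →L[ℝ] ℝ) := by
    funext y
    rw [hproj, (EuclideanSpace.proj (𝕜 := ℝ) k).fderiv]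
  rw [hfd, fderiv_fun_const]
  simp

lemma pd1_fk (hΩ : IsOpen Ω) (hu : ContDiffOn ℝ 3 u Ω) {x : ES n} (hx : x ∈ Ω) (k j : Fin n) :
    pd1 n (fun y => fderiv ℝ u y (evec n k)) x j = Hess n u x j k := by
  have hdiff2 : DifferentiableAt ℝ (fderiv ℝ u) x :=
    (((hu.contDiffAt (hΩ.mem_nhds hx)).fderiv_right (m := 1) (by norm_num)).differentiableAt
      (by norm_num))
  have hcomp := (ContinuousLinearMap.apply ℝ ℝ (evec n k)).hasFDerivAt.comp x hdiff2.hasFDerivAt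
  have hfk : (fun y => fderiv ℝ u y (evec n k))
      = (⇑(ContinuousLinearMap.apply ℝ ℝ (evec n k)) ∘ fderiv ℝ u) := rfl
  rw [pd1, hfk, hcomp.fderiv]
  have h2 := iteratedFDeriv_two_apply (𝕜 := ℝ) u x ![evec n j, evec n k]
  simp only [Matrix.cons_val_zero, Matrix.cons_val_one, Matrix.head_cons] at h2
  rw [show Hess n u x j k = iteratedFDeriv ℝ 2 u x ![evec n j, evec n k] from rfl, h2]
  rfl

lemma pd2_fk (hΩ : IsOpen Ω) (hu : ContDiffOn ℝ 3 u Ω) {x : ES n} (hx : x ∈ Ω) (k i j : Fin n) :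
    pd2 n (fun y => fderiv ℝ u y (evec n k)) x i j = pd3 n u x i j k := by
  have h3 : ContDiffOn ℝ (2 + 1) u Ω := hu.of_le (by norm_num)
  have hu2 : ContDiffOn ℝ 2 (fderiv ℝ u) Ω :=
    ((contDiffOn_succ_iff_fderiv_of_isOpen hΩ).mp h3).2.2
  have hfk : (fun y => fderiv ℝ u y (evec n k))
      = (⇑(ContinuousLinearMap.apply ℝ ℝ (evec n k)) ∘ fderiv ℝ u) := rfl
  have hcomp := (ContinuousLinearMap.apply ℝ ℝ (evec n k)).iteratedFDerivWithin_comp_left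
    (f := fderiv ℝ u) (hu2 x hx) hΩ.uniqueDiffOn hx (i := 2) le_rfl
  have hW1 : iteratedFDerivWithin ℝ 2
        (⇑(ContinuousLinearMap.apply ℝ ℝ (evec n k)) ∘ fderiv ℝ u) Ω x
      = iteratedFDeriv ℝ 2 (⇑(ContinuousLinearMap.apply ℝ ℝ (evec n k)) ∘ fderiv ℝ u) x :=
    iteratedFDerivWithin_of_isOpen 2 hΩ hx
  have hW2 : iteratedFDerivWithin ℝ 2 (fderiv ℝ u) Ω x = iteratedFDeriv ℝ 2 (fderiv ℝ u) x :=
    iteratedFDerivWithin_of_isOpen 2 hΩ hx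
  calc pd2 n (fun y => fderiv ℝ u y (evec n k)) x i j
      = iteratedFDerivWithin ℝ 2 (⇑(ContinuousLinearMap.apply ℝ ℝ (evec n k)) ∘ fderiv ℝ u) Ω x
          ![evec n i, evec n j] := by rw [pd2, hfk, hW1]
    _ = (iteratedFDerivWithin ℝ 2 (fderiv ℝ u) Ω x ![evec n i, evec n j]) (evec n k) := by
        rw [hcomp]; rfl
    _ = (iteratedFDeriv ℝ 2 (fderiv ℝ u) x ![evec n i, evec n j]) (evec n k) := by rw [hW2]
    _ = pd3 n u x i j k := by
        have h4 := iteratedFDeriv_succ_apply_right (𝕜 := ℝ) (n := 2) (f := u) (x := x)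
          (m := ![evec n i, evec n j, evec n k])
        rw [init3, last3] at h4
        exact h4.symm

lemma comp1 {ψ : ES n → ℝ} {lamF : ES n → Fin n → ℝ}
    (hΩ : IsOpen Ω) (hu : ContDiffOn ℝ 3 u Ω) (heig : HessEig n u lamF Ω)
    {x : ES n} (hx : x ∈ Ω) (k : Fin n) :
    DeltaG n u ψ (fun y => y k) x
      = -(∑ l, ∑ m, ginv n u x l m * pd1 n ψ x l * pd2 n u x m k) := by
  have hsum1 : ∑ i, ∑ j, ginv n u x i j * pd2 n (fun y => y k) x i j = 0 := by
    simp [pd2_coord]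
  have hpd2u : ∀ p q : Fin n, pd2 n u x p q = Hess n u x p q := fun p q => rfl
  have hGHsym : ∀ a b : Fin n,
      (ginv n u x * Hess n u x) a b = (ginv n u x * Hess n u x) b a := by
    have h1 : (ginv n u x * Hess n u x)ᵀ = ginv n u x * Hess n u x := by
      rw [Matrix.transpose_mul, hessT hΩ hu hx, ginvT hΩ hu hx, ← ginv_comm heig hx]
    intro a b
    have h2 := congrFun (congrFun h1 a) b
    rw [Matrix.transpose_apply] at h2
    exact h2.symm
  have hsum2 : ∑ j, ∑ p, ∑ q, ginv n u x j p * pd1 n ψ x q * pd2 n u x p q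
        * pd1 n (fun y => y k) x j
      = ∑ q, pd1 n ψ x q * (ginv n u x * Hess n u x) k q := by
    calc ∑ j, ∑ p, ∑ q, ginv n u x j p * pd1 n ψ x q * pd2 n u x p q
          * pd1 n (fun y => y k) x j
        = ∑ j, (if k = j then ∑ p, ∑ q,
            ginv n u x j p * pd1 n ψ x q * Hess n u x p q else 0) := by
          refine Finset.sum_congr rfl fun j _ => ?_
          by_cases h : k = j
          · rw [if_pos h]
            refine Finset.sum_congr rfl fun p _ => Finset.sum_congr rfl fun q _ => ?_
            rw [pd1_coord x k j, if_pos h, mul_one, hpd2u]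
          · rw [if_neg h]
            refine Finset.sum_eq_zero fun p _ => Finset.sum_eq_zero fun q _ => ?_
            rw [pd1_coord x k j, if_neg h, mul_zero]
      _ = ∑ p, ∑ q, ginv n u x k p * pd1 n ψ x q * Hess n u x p q := by
          rw [Finset.sum_ite_eq]
          simp
      _ = ∑ q, pd1 n ψ x q * (ginv n u x * Hess n u x) k q := by
          rw [Finset.sum_comm]
          refine Finset.sum_congr rfl fun q _ => ?_
          rw [Matrix.mul_apply, Finset.mul_sum]
          refine Finset.sum_congr rfl fun p _ => ?_
          ring
  rw [DeltaG, hsum1, hsum2, zero_sub, neg_inj]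
  calc ∑ q, pd1 n ψ x q * (ginv n u x * Hess n u x) k q
      = ∑ q, pd1 n ψ x q * (ginv n u x * Hess n u x) q k :=
        Finset.sum_congr rfl fun q _ => by rw [hGHsym]
    _ = ∑ l, ∑ m, ginv n u x l m * pd1 n ψ x l * pd2 n u x m k := by
        refine Finset.sum_congr rfl fun l _ => ?_
        rw [Matrix.mul_apply, Finset.mul_sum]
        refine Finset.sum_congr rfl fun m _ => ?_
        rw [hpd2u]
        ring

lemma comp2 {ψ : ES n → ℝ} {lamF : ES n → Fin n → ℝ}
    (hΩ : IsOpen Ω) (hu : ContDiffOn ℝ 3 u Ω) (hψ : ContDiffOn ℝ 1 ψ Ω)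
    (heig : HessEig n u lamF Ω)
    (heq : ∀ x ∈ Ω, ∑ i, Real.arctan (lamF x i) = ψ x)
    {x : ES n} (hx : x ∈ Ω) (k : Fin n) :
    DeltaG n u ψ (fun y => fderiv ℝ u y (evec n k)) x = ∑ l, ginv n u x l k * pd1 n ψ x l := by
  have hψk := pd1_psi hΩ hu hψ heig heq hx k
  have hpd2u : ∀ p q : Fin n, pd2 n u x p q = Hess n u x p q := fun p q => rfl
  have hHs : ∀ a b : Fin n, Hess n u x a b = Hess n u x b a := fun a b =>
    hess_symm hΩ hu hx a b
  have hS1 : ∑ i, ∑ j, ginv n u x i j * pd2 n (fun y => fderiv ℝ u y (evec n k)) x i j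
      = pd1 n ψ x k := by
    rw [hψk]
    refine Finset.sum_congr rfl fun i _ => Finset.sum_congr rfl fun j _ => ?_
    rw [pd2_fk hΩ hu hx, pd3_swap13 hΩ hu hx]
  have hHGH : Hess n u x * (ginv n u x * Hess n u x) = 1 - ginv n u x := by
    have h1 : Hess n u x * (ginv n u x * Hess n u x)
        = (Hess n u x * Hess n u x) * ginv n u x := by
      rw [ginv_comm heig hx, ← Matrix.mul_assoc]
    have h2 : (Hess n u x * Hess n u x) * ginv n u x
        = (1 + Hess n u x * Hess n u x) * ginv n u x - ginv n u x := by
      rw [Matrix.add_mul, Matrix.one_mul]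
      abel
    rw [h1, h2, g_mul_ginv heig hx]
  have hS2 : ∑ j, ∑ p, ∑ q, ginv n u x j p * pd1 n ψ x q * pd2 n u x p q
        * pd1 n (fun y => fderiv ℝ u y (evec n k)) x j
      = pd1 n ψ x k - ∑ q, ginv n u x k q * pd1 n ψ x q := by
    calc ∑ j, ∑ p, ∑ q, ginv n u x j p * pd1 n ψ x q * pd2 n u x p q
          * pd1 n (fun y => fderiv ℝ u y (evec n k)) x j
        = ∑ j, ∑ q, ∑ p, ginv n u x j p * pd1 n ψ x q * Hess n u x p q * Hess n u x j k := by
          refine Finset.sum_congr rfl fun j _ => ?_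
          rw [Finset.sum_comm]
          refine Finset.sum_congr rfl fun q _ => Finset.sum_congr rfl fun p _ => ?_
          rw [pd1_fk hΩ hu hx, hpd2u]
      _ = ∑ q, ∑ j, ∑ p, ginv n u x j p * pd1 n ψ x q * Hess n u x p q * Hess n u x j k :=
          Finset.sum_comm
      _ = ∑ q, pd1 n ψ x q * (Hess n u x * (ginv n u x * Hess n u x)) k q := by
          refine Finset.sum_congr rfl fun q _ => ?_
          rw [Matrix.mul_apply, Finset.mul_sum]
          refine Finset.sum_congr rfl fun j _ => ?_
          rw [Matrix.mul_apply, Finset.mul_sum, Finset.mul_sum]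
          refine Finset.sum_congr rfl fun p _ => ?_
          rw [hHs k j]
          ring
      _ = pd1 n ψ x k - ∑ q, ginv n u x k q * pd1 n ψ x q := by
          rw [hHGH]
          have hterm : ∀ q : Fin n, pd1 n ψ x q * ((1 - ginv n u x) k q)
              = (if k = q then pd1 n ψ x q else 0) - ginv n u x k q * pd1 n ψ x q := by
            intro q
            rw [Matrix.sub_apply, Matrix.one_apply]
            by_cases h : k = q
            · rw [if_pos h, if_pos h]; ring
            · rw [if_neg h, if_neg h]; ring
          rw [Finset.sum_congr rfl fun q _ => hterm q, Finset.sum_sub_distrib,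
            Finset.sum_ite_eq]
          simp
  rw [DeltaG, hS1, hS2, sub_sub_cancel]
  have hGs : ∀ a b : Fin n, ginv n u x a b = ginv n u x b a := by
    intro a b
    have h2 := congrFun (congrFun (ginvT hΩ hu hx) a) b
    rw [Matrix.transpose_apply] at h2
    exact h2.symm
  refine Finset.sum_congr rfl fun q _ => ?_
  rw [hGs k q]

end MCFAux
/-- the mean curvature formula `Δ_g X = J ∇_g ψ` for the Lagrangian graph
`X = (x, Du)`, stated componentwise: the first `n` components of `J(∑ gˡᵐ ψ_l ∂_m X)` are
`−∑ gˡᵐ ψ_l u_{mk}` and the last `n` components are `∑ gˡᵐ ψ_l δ_{mk} = ∑ gˡᵏ ψ_l`. -/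
theorem mean_curvature_formula (n : ℕ) (Ω : Set (ES n)) (hΩ : IsOpen Ω)
    (u ψ : ES n → ℝ) (lamF : ES n → Fin n → ℝ)
    (hu : ContDiffOn ℝ 3 u Ω) (hψ : ContDiffOn ℝ 1 ψ Ω)
    (heig : HessEig n u lamF Ω)
    (heq : ∀ x ∈ Ω, ∑ i, Real.arctan (lamF x i) = ψ x) :
    ∀ x ∈ Ω, ∀ k : Fin n,
      DeltaG n u ψ (fun y => y k) x =
          -(∑ l, ∑ m, ginv n u x l m * pd1 n ψ x l * pd2 n u x m k) ∧
        DeltaG n u ψ (fun y => fderiv ℝ u y (evec n k)) x =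
          ∑ l, ginv n u x l k * pd1 n ψ x l := by
  intro x hx k
  exact ⟨MCFAux.comp1 hΩ hu heig hx k, MCFAux.comp2 hΩ hu hψ heig heq hx k⟩
end
end
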